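/- arXiv:2203.00166 — 10 statements merged into one kernel-verified Lean document; each statement's English description precedes it below -/
import Mathlib

section
/- Let Y₁ ⊕ Y₂ be a direct sum of two Euclidean (inner-product) spaces, equipped with a norm ‖·‖ whose restrictions to Y₁ and Y₂ are the Euclidean norms, and suppose the norm is ε-invariant for some ε ∈ [0,1), i.e. (1−ε)‖y₁+y₂‖ ≤ ‖O₁y₁+O₂y₂‖ ≤ (1+ε)‖y₁+y₂‖ for all orthogonal operators O₁ on Y₁ and O₂ on Y₂. Define |||y₁+y₂||| = sup over orthogonal O₁, O₂ of ‖O₁y₁+O₂y₂‖. Then |||·||| is a norm on Y₁ ⊕ Y₂ satisfying ‖y₁+y₂‖ ≤ |||y₁+y₂||| ≤ (1+ε)‖y₁+y₂‖, it is invariant under all orthogonal operators on each summand, and it coincides with ‖·‖ on Y₁ and on Y₂. -/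
/-- Lemma `L:InvNorm`: the sup over orthogonal operators of an ε-invariant norm on a
direct sum of two Euclidean spaces is a norm, (1+ε)-equivalent to the original,
invariant under orthogonal operators on each summand, and coincides with the
original norm on each summand. -/
theorem stmt_0
    {Y₁ Y₂ : Type*}
    [NormedAddCommGroup Y₁] [InnerProductSpace ℝ Y₁] [FiniteDimensional ℝ Y₁]
    [NormedAddCommGroup Y₂] [InnerProductSpace ℝ Y₂] [FiniteDimensional ℝ Y₂]
    (N : Y₁ × Y₂ → ℝ)
    (hN_add : ∀ p q, N (p + q) ≤ N p + N q)
    (hN_smul : ∀ (t : ℝ) p, N (t • p) = |t| * N p)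
    (hN_def : ∀ p, N p = 0 → p = 0)
    (hN_res1 : ∀ y₁ : Y₁, N (y₁, 0) = ‖y₁‖)
    (hN_res2 : ∀ y₂ : Y₂, N (0, y₂) = ‖y₂‖)
    (ε : ℝ) (hε0 : 0 ≤ ε) (hε1 : ε < 1)
    (hinv : ∀ (O₁ : Y₁ ≃ₗᵢ[ℝ] Y₁) (O₂ : Y₂ ≃ₗᵢ[ℝ] Y₂) (y₁ : Y₁) (y₂ : Y₂),
      (1 - ε) * N (y₁, y₂) ≤ N (O₁ y₁, O₂ y₂) ∧
      N (O₁ y₁, O₂ y₂) ≤ (1 + ε) * N (y₁, y₂)) :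
    let T : Y₁ × Y₂ → ℝ := fun p =>
      sSup {r | ∃ (O₁ : Y₁ ≃ₗᵢ[ℝ] Y₁) (O₂ : Y₂ ≃ₗᵢ[ℝ] Y₂), r = N (O₁ p.1, O₂ p.2)}
    (∀ p q, T (p + q) ≤ T p + T q) ∧
    (∀ (t : ℝ) p, T (t • p) = |t| * T p) ∧
    (∀ p, T p = 0 → p = 0) ∧
    (∀ p, N p ≤ T p ∧ T p ≤ (1 + ε) * N p) ∧
    (∀ (V₁ : Y₁ ≃ₗᵢ[ℝ] Y₁) (V₂ : Y₂ ≃ₗᵢ[ℝ] Y₂) (y₁ : Y₁) (y₂ : Y₂),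
      T (V₁ y₁, V₂ y₂) = T (y₁, y₂)) ∧
    (∀ y₁ : Y₁, T (y₁, 0) = ‖y₁‖) ∧
    (∀ y₂ : Y₂, T (0, y₂) = ‖y₂‖) := by

  intro T
  -- basic facts about N
  have hN0 : N 0 = 0 := by
    have := hN_res1 0
    exact this.trans norm_zero
  have hNneg : ∀ p, N (-p) = N p := by
    intro p
    have := hN_smul (-1) p
    simpa using this
  have hNnonneg : ∀ p, 0 ≤ N p := by
    intro p
    have h := hN_add p (-p)
    rw [add_neg_cancel, hN0, hNneg] at h
    linarith
  -- the defining set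
  have hbdd : ∀ p : Y₁ × Y₂, BddAbove
      {r | ∃ (O₁ : Y₁ ≃ₗᵢ[ℝ] Y₁) (O₂ : Y₂ ≃ₗᵢ[ℝ] Y₂), r = N (O₁ p.1, O₂ p.2)} := by
    intro p
    refine ⟨(1 + ε) * N p, ?_⟩
    rintro r ⟨O₁, O₂, rfl⟩
    have := (hinv O₁ O₂ p.1 p.2).2
    simpa using this
  have hmem : ∀ (p : Y₁ × Y₂) (O₁ : Y₁ ≃ₗᵢ[ℝ] Y₁) (O₂ : Y₂ ≃ₗᵢ[ℝ] Y₂),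
      N (O₁ p.1, O₂ p.2) ∈
        {r | ∃ (O₁ : Y₁ ≃ₗᵢ[ℝ] Y₁) (O₂ : Y₂ ≃ₗᵢ[ℝ] Y₂), r = N (O₁ p.1, O₂ p.2)} :=
    fun p O₁ O₂ => ⟨O₁, O₂, rfl⟩
  have hne : ∀ p : Y₁ × Y₂, Set.Nonempty
      {r | ∃ (O₁ : Y₁ ≃ₗᵢ[ℝ] Y₁) (O₂ : Y₂ ≃ₗᵢ[ℝ] Y₂), r = N (O₁ p.1, O₂ p.2)} :=
    fun p => ⟨_, hmem p (LinearIsometryEquiv.refl ℝ Y₁) (LinearIsometryEquiv.refl ℝ Y₂)⟩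
  have hle : ∀ p, N p ≤ T p := by
    intro p
    have h := le_csSup (hbdd p) (hmem p (LinearIsometryEquiv.refl ℝ Y₁) (LinearIsometryEquiv.refl ℝ Y₂))
    simpa using h
  have hge : ∀ p, T p ≤ (1 + ε) * N p := by
    intro p
    refine csSup_le (hne p) ?_
    rintro r ⟨O₁, O₂, rfl⟩
    have := (hinv O₁ O₂ p.1 p.2).2
    simpa using this
  have hmemle : ∀ (p : Y₁ × Y₂) (O₁ : Y₁ ≃ₗᵢ[ℝ] Y₁) (O₂ : Y₂ ≃ₗᵢ[ℝ] Y₂),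
      N (O₁ p.1, O₂ p.2) ≤ T p := fun p O₁ O₂ => le_csSup (hbdd p) (hmem p O₁ O₂)
  -- subadditivity
  have hTadd : ∀ p q, T (p + q) ≤ T p + T q := by
    intro p q
    refine csSup_le (hne _) ?_
    rintro r ⟨O₁, O₂, rfl⟩
    have heq : ((O₁ (p + q).1 : Y₁), (O₂ (p + q).2 : Y₂))
        = (O₁ p.1, O₂ p.2) + (O₁ q.1, O₂ q.2) := by
      simp [Prod.ext_iff]
    calc N (O₁ (p + q).1, O₂ (p + q).2)
        ≤ N (O₁ p.1, O₂ p.2) + N (O₁ q.1, O₂ q.2) := by rw [heq]; exact hN_add _ _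
      _ ≤ T p + T q := add_le_add (hmemle p O₁ O₂) (hmemle q O₁ O₂)
  -- smul
  have hsmul_le : ∀ (t : ℝ) p, T (t • p) ≤ |t| * T p := by
    intro t p
    refine csSup_le (hne _) ?_
    rintro r ⟨O₁, O₂, rfl⟩
    have heq : ((O₁ (t • p).1 : Y₁), (O₂ (t • p).2 : Y₂)) = t • (O₁ p.1, O₂ p.2) := by
      simp [Prod.ext_iff]
    rw [heq, hN_smul]
    exact mul_le_mul_of_nonneg_left (hmemle p O₁ O₂) (abs_nonneg t)
  have hT0 : T 0 = 0 := by
    have h1 := hle 0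
    have h2 := hge 0
    rw [hN0] at h1 h2
    simp at h2
    linarith
  have hTsmul : ∀ (t : ℝ) p, T (t • p) = |t| * T p := by
    intro t p
    rcases eq_or_ne t 0 with rfl | ht
    · simp [hT0]
    · refine le_antisymm (hsmul_le t p) ?_
      have h := hsmul_le t⁻¹ (t • p)
      rw [inv_smul_smul₀ ht] at h
      have habs : (0:ℝ) < |t| := abs_pos.2 ht
      rw [abs_inv] at h
      calc |t| * T p ≤ |t| * (|t|⁻¹ * T (t • p)) :=
            mul_le_mul_of_nonneg_left h (abs_nonneg t)
        _ = T (t • p) := by field_simp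
  -- definiteness
  have hTdef : ∀ p, T p = 0 → p = 0 := by
    intro p hp
    apply hN_def
    have h1 := hle p
    have h2 := hNnonneg p
    linarith [hp ▸ h1]
  -- invariance
  have hTinv : ∀ (V₁ : Y₁ ≃ₗᵢ[ℝ] Y₁) (V₂ : Y₂ ≃ₗᵢ[ℝ] Y₂) (y₁ : Y₁) (y₂ : Y₂),
      T (V₁ y₁, V₂ y₂) = T (y₁, y₂) := by
    intro V₁ V₂ y₁ y₂
    show sSup _ = sSup _
    congr 1
    ext r
    constructor
    · rintro ⟨O₁, O₂, rfl⟩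
      exact ⟨V₁.trans O₁, V₂.trans O₂, by simp⟩
    · rintro ⟨U₁, U₂, rfl⟩
      exact ⟨V₁.symm.trans U₁, V₂.symm.trans U₂, by simp⟩
  -- restrictions
  have hTres1 : ∀ y₁ : Y₁, T (y₁, 0) = ‖y₁‖ := by
    intro y₁
    show sSup _ = _
    have hset : {r | ∃ (O₁ : Y₁ ≃ₗᵢ[ℝ] Y₁) (O₂ : Y₂ ≃ₗᵢ[ℝ] Y₂),
        r = N (O₁ (y₁, (0:Y₂)).1, O₂ (y₁, (0:Y₂)).2)} = {‖y₁‖} := by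
      ext r
      simp only [Set.mem_setOf_eq, Set.mem_singleton_iff]
      constructor
      · rintro ⟨O₁, O₂, rfl⟩
        simp only [map_zero]
        rw [hN_res1]
        exact O₁.norm_map y₁
      · rintro rfl
        exact ⟨LinearIsometryEquiv.refl ℝ Y₁, LinearIsometryEquiv.refl ℝ Y₂,
          by simp [hN_res1]⟩
    rw [hset, csSup_singleton]
  have hTres2 : ∀ y₂ : Y₂, T (0, y₂) = ‖y₂‖ := by
    intro y₂
    show sSup _ = _
    have hset : {r | ∃ (O₁ : Y₁ ≃ₗᵢ[ℝ] Y₁) (O₂ : Y₂ ≃ₗᵢ[ℝ] Y₂),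
        r = N (O₁ ((0:Y₁), y₂).1, O₂ ((0:Y₁), y₂).2)} = {‖y₂‖} := by
      ext r
      simp only [Set.mem_setOf_eq, Set.mem_singleton_iff]
      constructor
      · rintro ⟨O₁, O₂, rfl⟩
        simp only [map_zero]
        rw [hN_res2]
        exact O₂.norm_map y₂
      · rintro rfl
        exact ⟨LinearIsometryEquiv.refl ℝ Y₁, LinearIsometryEquiv.refl ℝ Y₂,
          by simp [hN_res2]⟩
    rw [hset, csSup_singleton]
  exact ⟨hTadd, hTsmul, hTdef, fun p => ⟨hle p, hge p⟩, hTinv, hTres1, hTres2⟩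
end

section
/- If a norm on a direct sum Y = Y₁ ⊕ Y₂ of two Euclidean spaces satisfies ‖O₁y₁ + O₂y₂‖ = ‖y₁ + y₂‖ for all y₁ ∈ Y₁, y₂ ∈ Y₂ and all orthogonal operators O₁ on Y₁ and O₂ on Y₂, then there exists a 1-unconditional norm ‖·‖_Z on ℝ² such that ‖y₁ + y₂‖ = ‖(‖y₁‖, ‖y₂‖)‖_Z for all y₁ ∈ Y₁ and y₂ ∈ Y₂. -/
open Module

lemma exists_isometry_smul_eq {Y : Type*} [NormedAddCommGroup Y] [InnerProductSpace ℝ Y]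
    [FiniteDimensional ℝ Y] {u v : Y} (h : ‖u‖ = ‖v‖) :
    ∃ O : Y ≃ₗᵢ[ℝ] Y, O u = v :=
  ⟨Submodule.reflection (ℝ ∙ (u - v))ᗮ, Submodule.reflection_sub h⟩

/-- Lemma `L:InvToUncond`: a norm on a direct sum of two Euclidean spaces which is
invariant under orthogonal operators on each summand is given by a 1-unconditional
norm on ℝ² applied to the pair of Euclidean norms. -/
theorem stmt_1
    {Y₁ Y₂ : Type*}
    [NormedAddCommGroup Y₁] [InnerProductSpace ℝ Y₁] [FiniteDimensional ℝ Y₁]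
    [NormedAddCommGroup Y₂] [InnerProductSpace ℝ Y₂] [FiniteDimensional ℝ Y₂]
    (hd1 : 0 < Module.finrank ℝ Y₁) (hd2 : 0 < Module.finrank ℝ Y₂)
    (N : Y₁ × Y₂ → ℝ)
    (hN_add : ∀ p q, N (p + q) ≤ N p + N q)
    (hN_smul : ∀ (t : ℝ) p, N (t • p) = |t| * N p)
    (hN_def : ∀ p, N p = 0 → p = 0)
    (hinv : ∀ (O₁ : Y₁ ≃ₗᵢ[ℝ] Y₁) (O₂ : Y₂ ≃ₗᵢ[ℝ] Y₂) (y₁ : Y₁) (y₂ : Y₂),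
      N (O₁ y₁, O₂ y₂) = N (y₁, y₂)) :
    ∃ nZ : ℝ × ℝ → ℝ,
      (∀ p q : ℝ × ℝ, nZ (p + q) ≤ nZ p + nZ q) ∧
      (∀ (t : ℝ) (p : ℝ × ℝ), nZ (t • p) = |t| * nZ p) ∧
      (∀ p : ℝ × ℝ, nZ p = 0 → p = 0) ∧
      (∀ a b : ℝ, nZ (-a, b) = nZ (a, b) ∧ nZ (a, -b) = nZ (a, b)) ∧
      (∀ (y₁ : Y₁) (y₂ : Y₂), N (y₁, y₂) = nZ (‖y₁‖, ‖y₂‖)) := by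
  have : Nontrivial Y₁ := Module.nontrivial_of_finrank_pos hd1
  have : Nontrivial Y₂ := Module.nontrivial_of_finrank_pos hd2
  obtain ⟨x₁, hx₁⟩ := exists_ne (0 : Y₁)
  obtain ⟨x₂, hx₂⟩ := exists_ne (0 : Y₂)
  set e₁ : Y₁ := ‖x₁‖⁻¹ • x₁ with he₁
  set e₂ : Y₂ := ‖x₂‖⁻¹ • x₂ with he₂
  have hne₁ : ‖e₁‖ = 1 := norm_smul_inv_norm hx₁
  have hne₂ : ‖e₂‖ = 1 := norm_smul_inv_norm hx₂
  refine ⟨fun p => N (p.1 • e₁, p.2 • e₂), ?_, ?_, ?_, ?_, ?_⟩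
  · intro p q
    have : ((p.1 + q.1) • e₁, (p.2 + q.2) • e₂)
        = (p.1 • e₁, p.2 • e₂) + (q.1 • e₁, q.2 • e₂) := by
      simp [Prod.ext_iff, add_smul]
    simpa [this] using hN_add (p.1 • e₁, p.2 • e₂) (q.1 • e₁, q.2 • e₂)
  · intro t p
    have : ((t * p.1) • e₁, (t * p.2) • e₂) = t • (p.1 • e₁, p.2 • e₂) := by
      simp [Prod.ext_iff, mul_smul]
    simpa [this] using hN_smul t (p.1 • e₁, p.2 • e₂)
  · intro p hp
    have h0 := hN_def _ hp
    have h1 : p.1 • e₁ = 0 := congrArg Prod.fst h0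
    have h2 : p.2 • e₂ = 0 := congrArg Prod.snd h0
    have he₁0 : e₁ ≠ 0 := by intro h; rw [h] at hne₁; simp at hne₁
    have he₂0 : e₂ ≠ 0 := by intro h; rw [h] at hne₂; simp at hne₂
    have hp1 : p.1 = 0 := by
      rcases smul_eq_zero.mp h1 with h | h
      · exact h
      · exact absurd h he₁0
    have hp2 : p.2 = 0 := by
      rcases smul_eq_zero.mp h2 with h | h
      · exact h
      · exact absurd h he₂0
    exact Prod.ext hp1 hp2
  · intro a b
    obtain ⟨O₁, hO₁⟩ := exists_isometry_smul_eq (u := e₁) (v := -e₁) (by simp)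
    obtain ⟨O₂, hO₂⟩ := exists_isometry_smul_eq (u := e₂) (v := -e₂) (by simp)
    constructor
    · have := hinv O₁ (LinearIsometryEquiv.refl ℝ Y₂) (a • e₁) (b • e₂)
      simpa [map_smul, hO₁, smul_neg, neg_smul] using this
    · have := hinv (LinearIsometryEquiv.refl ℝ Y₁) O₂ (a • e₁) (b • e₂)
      simpa [map_smul, hO₂, smul_neg, neg_smul] using this
  · intro y₁ y₂
    have h1 : ‖‖y₁‖ • e₁‖ = ‖y₁‖ := by
      rw [norm_smul, hne₁]; simp
    have h2 : ‖‖y₂‖ • e₂‖ = ‖y₂‖ := by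
      rw [norm_smul, hne₂]; simp
    obtain ⟨O₁, hO₁⟩ := exists_isometry_smul_eq (u := ‖y₁‖ • e₁) (v := y₁) h1
    obtain ⟨O₂, hO₂⟩ := exists_isometry_smul_eq (u := ‖y₂‖ • e₂) (v := y₂) h2
    have := hinv O₁ O₂ (‖y₁‖ • e₁) (‖y₂‖ • e₂)
    rw [hO₁, hO₂] at this
    exact this
end

section
/- Let Z = (ℝ², ‖·‖_Z) have a normalized 1-unconditional basis (1,0), (0,1), and for τ ∈ [0, π/2] let u(τ) = (cos τ, sin τ)/‖(cos τ, sin τ)‖_Z. Then for all 0 ≤ τ₁ < τ₂ ≤ π/2, ‖u(τ₂) − u(τ₁)‖_Z ≤ (2 M_Z / m_Z)(τ₂ − τ₁), where m_Z = min_τ ‖(cos τ, sin τ)‖_Z and M_Z = max_τ ‖(cos τ, sin τ)‖_Z. In particular ‖u(τ₂) − u(τ₁)‖_Z ≤ 4(τ₂ − τ₁). -/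
open Real

/-- The Lipschitz estimate of Proposition `P:diff`: the normalized curve
u(τ) = (cos τ, sin τ)/‖(cos τ, sin τ)‖_Z is (2M_Z/m_Z)-Lipschitz on [0, π/2];
in particular 4-Lipschitz. -/
theorem stmt_3
    (nZ : ℝ × ℝ → ℝ)
    (hN_add : ∀ p q, nZ (p + q) ≤ nZ p + nZ q)
    (hN_smul : ∀ (t : ℝ) p, nZ (t • p) = |t| * nZ p)
    (hN_def : ∀ p, nZ p = 0 → p = 0)
    (h10 : nZ (1, 0) = 1) (h01 : nZ (0, 1) = 1)
    (huncond : ∀ a b : ℝ, nZ (-a, b) = nZ (a, b) ∧ nZ (a, -b) = nZ (a, b)) :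
    let u : ℝ → ℝ × ℝ := fun τ =>
      (Real.cos τ / nZ (Real.cos τ, Real.sin τ),
       Real.sin τ / nZ (Real.cos τ, Real.sin τ))
    let mZ : ℝ := sInf {r | ∃ τ : ℝ, r = nZ (Real.cos τ, Real.sin τ)}
    let MZ : ℝ := sSup {r | ∃ τ : ℝ, r = nZ (Real.cos τ, Real.sin τ)}
    ∀ τ₁ τ₂ : ℝ, 0 ≤ τ₁ → τ₁ < τ₂ → τ₂ ≤ π / 2 →
      nZ (u τ₂ - u τ₁) ≤ (2 * MZ / mZ) * (τ₂ - τ₁) ∧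
      nZ (u τ₂ - u τ₁) ≤ 4 * (τ₂ - τ₁) := by
  intro u mZ MZ τ₁ τ₂ h1 hlt h2
  -- basic norm facts
  have hzero : nZ (0 : ℝ × ℝ) = 0 := by
    have := hN_smul 0 (0, 0)
    simpa using this
  have hneg : ∀ p : ℝ × ℝ, nZ (-p) = nZ p := by
    intro p
    have := hN_smul (-1) p
    simpa using this
  have hnonneg : ∀ p : ℝ × ℝ, 0 ≤ nZ p := by
    intro p
    have h := hN_add p (-p)
    rw [add_neg_cancel, hneg, hzero] at h
    linarith
  have haxis1 : ∀ a : ℝ, nZ (a, 0) = |a| := by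
    intro a
    have e : ((a, 0) : ℝ × ℝ) = a • ((1 : ℝ), (0 : ℝ)) := by
      simp [Prod.smul_mk]
    rw [e, hN_smul, h10, mul_one]
  have haxis2 : ∀ b : ℝ, nZ (0, b) = |b| := by
    intro b
    have e : ((0, b) : ℝ × ℝ) = b • ((0 : ℝ), (1 : ℝ)) := by
      simp [Prod.smul_mk]
    rw [e, hN_smul, h01, mul_one]
  have hub : ∀ a b : ℝ, nZ (a, b) ≤ |a| + |b| := by
    intro a b
    have e : ((a, b) : ℝ × ℝ) = (a, 0) + (0, b) := by
      simp [Prod.mk_add_mk]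
    calc nZ (a, b) = nZ ((a, 0) + (0, b)) := by rw [← e]
      _ ≤ nZ (a, 0) + nZ (0, b) := hN_add _ _
      _ = |a| + |b| := by rw [haxis1, haxis2]
  have hlb1 : ∀ a b : ℝ, |a| ≤ nZ (a, b) := by
    intro a b
    have e : ((2 : ℝ)) • ((a, 0) : ℝ × ℝ) = (a, b) + (a, -b) := by
      simp [Prod.smul_mk, Prod.mk_add_mk]
      ring
    have h := hN_add (a, b) (a, -b)
    rw [← e, hN_smul, haxis1, (huncond a b).2] at h
    rw [show |(2:ℝ)| = 2 by norm_num] at h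
    linarith
  have hlb2 : ∀ a b : ℝ, |b| ≤ nZ (a, b) := by
    intro a b
    have e : ((2 : ℝ)) • ((0, b) : ℝ × ℝ) = (a, b) + (-a, b) := by
      simp [Prod.smul_mk, Prod.mk_add_mk]
      ring
    have h := hN_add (a, b) (-a, b)
    rw [← e, hN_smul, haxis2, (huncond a b).1] at h
    rw [show |(2:ℝ)| = 2 by norm_num] at h
    linarith
  -- bounds on the set
  have hSmem : ∀ τ : ℝ, nZ (Real.cos τ, Real.sin τ) ∈
      {r | ∃ τ : ℝ, r = nZ (Real.cos τ, Real.sin τ)} := fun τ => ⟨τ, rfl⟩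
  have hsq2 : Real.sqrt 2 * Real.sqrt 2 = 2 := Real.mul_self_sqrt (by norm_num)
  have hsq2nn : (0:ℝ) ≤ Real.sqrt 2 := Real.sqrt_nonneg 2
  have hS_lb : ∀ r ∈ {r | ∃ τ : ℝ, r = nZ (Real.cos τ, Real.sin τ)},
      Real.sqrt 2 / 2 ≤ r := by
    rintro r ⟨τ, rfl⟩
    have hc := hlb1 (Real.cos τ) (Real.sin τ)
    have hs := hlb2 (Real.cos τ) (Real.sin τ)
    have hpyth := Real.sin_sq_add_cos_sq τ
    nlinarith [abs_nonneg (Real.cos τ), abs_nonneg (Real.sin τ),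
      sq_abs (Real.cos τ), sq_abs (Real.sin τ),
      hnonneg (Real.cos τ, Real.sin τ),
      sq_nonneg (2 * nZ (Real.cos τ, Real.sin τ) - Real.sqrt 2)]
  have hS_ub : ∀ r ∈ {r | ∃ τ : ℝ, r = nZ (Real.cos τ, Real.sin τ)},
      r ≤ Real.sqrt 2 := by
    rintro r ⟨τ, rfl⟩
    have h := hub (Real.cos τ) (Real.sin τ)
    have hpyth := Real.sin_sq_add_cos_sq τ
    nlinarith [abs_nonneg (Real.cos τ), abs_nonneg (Real.sin τ),
      sq_abs (Real.cos τ), sq_abs (Real.sin τ),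
      sq_nonneg (|Real.cos τ| - |Real.sin τ|),
      sq_nonneg (|Real.cos τ| + |Real.sin τ| - Real.sqrt 2)]
  have hSne : {r | ∃ τ : ℝ, r = nZ (Real.cos τ, Real.sin τ)}.Nonempty := ⟨_, hSmem 0⟩
  have hbddb : BddBelow {r | ∃ τ : ℝ, r = nZ (Real.cos τ, Real.sin τ)} :=
    ⟨Real.sqrt 2 / 2, hS_lb⟩
  have hbdda : BddAbove {r | ∃ τ : ℝ, r = nZ (Real.cos τ, Real.sin τ)} :=
    ⟨Real.sqrt 2, hS_ub⟩
  have hmZ_lb : Real.sqrt 2 / 2 ≤ mZ := le_csInf hSne hS_lb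
  have hMZ_ub : MZ ≤ Real.sqrt 2 := csSup_le hSne hS_ub
  have hmZ_pos : 0 < mZ := lt_of_lt_of_le (by positivity) hmZ_lb
  have hmn₁ : mZ ≤ nZ (Real.cos τ₁, Real.sin τ₁) := csInf_le hbddb (hSmem τ₁)
  have hmn₂ : mZ ≤ nZ (Real.cos τ₂, Real.sin τ₂) := csInf_le hbddb (hSmem τ₂)
  have hn₁pos : 0 < nZ (Real.cos τ₁, Real.sin τ₁) := hmZ_pos.trans_le hmn₁
  have hn₂pos : 0 < nZ (Real.cos τ₂, Real.sin τ₂) := hmZ_pos.trans_le hmn₂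
  -- the chord bound
  have hd0 : 0 ≤ (τ₂ - τ₁) / 2 := by linarith
  have hdpi : (τ₂ - τ₁) / 2 ≤ π := by
    have := Real.pi_pos; linarith
  have hsind_nn : 0 ≤ Real.sin ((τ₂ - τ₁) / 2) :=
    Real.sin_nonneg_of_nonneg_of_le_pi hd0 hdpi
  have hsind_le : Real.sin ((τ₂ - τ₁) / 2) ≤ (τ₂ - τ₁) / 2 := Real.sin_le hd0
  have hMZmem : nZ (Real.sin ((τ₂ + τ₁) / 2), Real.cos ((τ₂ + τ₁) / 2)) ≤ MZ := by
    apply le_csSup hbdda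
    exact ⟨π / 2 - (τ₂ + τ₁) / 2, by
      rw [Real.cos_pi_div_two_sub, Real.sin_pi_div_two_sub]⟩
  have hMZ_nn : 0 ≤ MZ := le_trans (hnonneg _) hMZmem
  have hchord : ((Real.cos τ₂ - Real.cos τ₁, Real.sin τ₂ - Real.sin τ₁) : ℝ × ℝ)
      = (2 * Real.sin ((τ₂ - τ₁) / 2)) •
        (-(Real.sin ((τ₂ + τ₁) / 2)), Real.cos ((τ₂ + τ₁) / 2)) := by
    have e1 := Real.cos_sub_cos τ₂ τ₁
    have e2 := Real.sin_sub_sin τ₂ τ₁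
    simp only [Prod.smul_mk, smul_eq_mul, Prod.mk.injEq]
    constructor
    · linear_combination e1
    · linear_combination e2
  have hD : nZ (Real.cos τ₂ - Real.cos τ₁, Real.sin τ₂ - Real.sin τ₁)
      ≤ MZ * (τ₂ - τ₁) := by
    rw [hchord, hN_smul, abs_of_nonneg (by linarith), (huncond _ _).1]
    calc 2 * Real.sin ((τ₂ - τ₁) / 2) *
          nZ (Real.sin ((τ₂ + τ₁) / 2), Real.cos ((τ₂ + τ₁) / 2))
        ≤ (τ₂ - τ₁) * MZ := by
          apply mul_le_mul (by linarith) hMZmem (hnonneg _) (by linarith)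
      _ = MZ * (τ₂ - τ₁) := mul_comm _ _
  -- the splitting estimate
  have hn₁ne : nZ (Real.cos τ₁, Real.sin τ₁) ≠ 0 := ne_of_gt hn₁pos
  have hn₂ne : nZ (Real.cos τ₂, Real.sin τ₂) ≠ 0 := ne_of_gt hn₂pos
  set p : ℝ × ℝ := (Real.cos τ₂, Real.sin τ₂) with hp
  set q : ℝ × ℝ := (Real.cos τ₁, Real.sin τ₁) with hq
  have hpq : p - q = (Real.cos τ₂ - Real.cos τ₁, Real.sin τ₂ - Real.sin τ₁) := rfl
  have hsplit : (nZ p)⁻¹ • p - (nZ q)⁻¹ • q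
      = (nZ p)⁻¹ • (p - q) + ((nZ p)⁻¹ - (nZ q)⁻¹) • q := by
    module
  have huval : u τ₂ - u τ₁ = (nZ p)⁻¹ • p - (nZ q)⁻¹ • q := by
    simp only [u, hp, hq, Prod.smul_mk, smul_eq_mul, Prod.mk_sub_mk, Prod.mk.injEq]
    constructor <;> ring
  -- reverse triangle inequality
  have hrev : |nZ q - nZ p| ≤ nZ (p - q) := by
    have h1 : nZ p ≤ nZ q + nZ (p - q) := by
      have := hN_add q (p - q)
      simpa using this
    have h2 : nZ q ≤ nZ p + nZ (p - q) := by
      have := hN_add p (q - p)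
      have e : nZ (q - p) = nZ (p - q) := by
        rw [show q - p = -(p - q) by ring, hneg]
      rw [e] at this
      simpa using this
    rw [abs_sub_le_iff]
    constructor <;> linarith
  have hmain : nZ (u τ₂ - u τ₁) ≤ 2 * nZ (p - q) / nZ p := by
    rw [huval, hsplit]
    calc nZ ((nZ p)⁻¹ • (p - q) + ((nZ p)⁻¹ - (nZ q)⁻¹) • q)
        ≤ nZ ((nZ p)⁻¹ • (p - q)) + nZ (((nZ p)⁻¹ - (nZ q)⁻¹) • q) := hN_add _ _
      _ = |(nZ p)⁻¹| * nZ (p - q) + |(nZ p)⁻¹ - (nZ q)⁻¹| * nZ q := by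
          rw [hN_smul, hN_smul]
      _ = (nZ p)⁻¹ * nZ (p - q) + |nZ q - nZ p| / nZ p := by
          rw [abs_of_nonneg (le_of_lt (inv_pos.mpr hn₂pos))]
          congr 1
          have e : (nZ p)⁻¹ - (nZ q)⁻¹ = (nZ q - nZ p) / (nZ q * nZ p) := by
            field_simp
          rw [e, abs_div, abs_of_pos (mul_pos hn₁pos hn₂pos),
            mul_comm (nZ q) (nZ p), div_mul_eq_div_div, div_mul_cancel₀ _ hn₁ne]
      _ ≤ (nZ p)⁻¹ * nZ (p - q) + nZ (p - q) / nZ p := by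
          gcongr
      _ = 2 * nZ (p - q) / nZ p := by
          field_simp
          ring
  have hkey : nZ (u τ₂ - u τ₁) ≤ 2 * MZ / mZ * (τ₂ - τ₁) := by
    have hstep : 2 * nZ (p - q) / nZ p ≤ 2 * (MZ * (τ₂ - τ₁)) / mZ := by
      apply div_le_div₀ (by nlinarith [hMZ_nn, hlt]) _ hmZ_pos hmn₂
      rw [hpq] at *
      linarith [hD]
    calc nZ (u τ₂ - u τ₁) ≤ 2 * nZ (p - q) / nZ p := hmain
      _ ≤ 2 * (MZ * (τ₂ - τ₁)) / mZ := hstep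
      _ = 2 * MZ / mZ * (τ₂ - τ₁) := by ring
  refine ⟨hkey, ?_⟩
  have h4 : 2 * MZ / mZ ≤ 4 := by
    rw [div_le_iff₀ hmZ_pos]
    linarith
  calc nZ (u τ₂ - u τ₁) ≤ 2 * MZ / mZ * (τ₂ - τ₁) := hkey
    _ ≤ 4 * (τ₂ - τ₁) := by
        apply mul_le_mul_of_nonneg_right h4 (by linarith)
end

section
/- Let 0 < δ < 1/4 with k := 1/δ ∈ ℕ. Let A ⊂ ℝ² be a closed convex domain symmetric about both coordinate axes containing (±1,0) and (0,±1) on its boundary. Let rᵢ (1 ≤ i ≤ k) denote the x-coordinate of the boundary point of A in the first quadrant on the line y = 1 − iδ, and Lᵢ = rᵢ − r_{i−1} (with L₀ = r₀, the largest x-coordinate of A ∩ {y=1}). Then convexity of A implies L₁ ≥ L₂ ≥ ⋯ ≥ L_k, and for all i with δ^{−1/2} + 1 ≤ i ≤ k − 1 the inequalities (1+ω(δ))r_{i−1} ≥ r_{i−1} + 2δrᵢ + (Lᵢ − L_{i+1}) and (1+ω(δ))rᵢ ≥ rᵢ + 2δr_{i−1} + (L_{i−1} − Lᵢ) hold, where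 ω(δ) = 4δ + δ^{1/2}. -/
open Real

set_option maxHeartbeats 1000000 in
/-- The key inequalities \eqref{E:B_i-1} and \eqref{E:T_i} in the proof of
Proposition `P:2Dpoly`, together with the monotonicity L₁ ≥ L₂ ≥ ⋯ ≥ L_k. -/
theorem stmt_6
    (δ : ℝ) (hδ0 : 0 < δ) (hδ4 : δ < 1 / 4)
    (k : ℕ) (hk : (k : ℝ) = 1 / δ)
    (A : Set (ℝ × ℝ))
    (hcomp : IsCompact A) (hconv : Convex ℝ A)
    (hint : (interior A).Nonempty)
    (hsymmx : ∀ p ∈ A, (-p.1, p.2) ∈ A)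
    (hsymmy : ∀ p ∈ A, (p.1, -p.2) ∈ A)
    (h10 : ((1 : ℝ), (0 : ℝ)) ∈ frontier A)
    (h01 : ((0 : ℝ), (1 : ℝ)) ∈ frontier A) :
    let r : ℕ → ℝ := fun i => sSup {x : ℝ | (x, 1 - (i : ℝ) * δ) ∈ A}
    let L : ℕ → ℝ := fun i => if i = 0 then r 0 else r i - r (i - 1)
    let ω : ℝ := 4 * δ + Real.sqrt δ
    (∀ i : ℕ, 1 ≤ i → i + 1 ≤ k → L (i + 1) ≤ L i) ∧
    (∀ i : ℕ, 1 / Real.sqrt δ + 1 ≤ (i : ℝ) → i ≤ k - 1 →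
      (1 + ω) * r (i - 1) ≥ r (i - 1) + 2 * δ * r i + (L i - L (i + 1)) ∧
      (1 + ω) * r i ≥ r i + 2 * δ * r (i - 1) + (L (i - 1) - L i)) := by
  intro r L ω
  have hLdef : ∀ i : ℕ, L i = if i = 0 then r 0 else r i - r (i - 1) := fun _ => rfl
  have hωdef : ω = 4 * δ + Real.sqrt δ := rfl
  have hA_closed : IsClosed A := hcomp.isClosed
  have hkδ : (k : ℝ) * δ = 1 := by rw [hk]; field_simp
  have h01A : ((0 : ℝ), (1 : ℝ)) ∈ A := by
    have := frontier_subset_closure h01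
    rwa [hA_closed.closure_eq] at this
  have h0m1A : ((0 : ℝ), (-1 : ℝ)) ∈ A := by
    have := hsymmy _ h01A
    simpa using this
  have h00A : ((0 : ℝ), (0 : ℝ)) ∈ A := by
    have := hconv h01A h0m1A (by norm_num : (0:ℝ) ≤ 1/2) (by norm_num : (0:ℝ) ≤ 1/2)
      (by norm_num)
    simpa using this
  have h0mem : ∀ i : ℕ, i ≤ k → ((0 : ℝ), 1 - (i : ℝ) * δ) ∈ A := by
    intro i hik
    have hik' : (i : ℝ) ≤ k := by exact_mod_cast hik
    have h1 : (i : ℝ) * δ ≤ 1 := by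
      calc (i : ℝ) * δ ≤ (k : ℝ) * δ := by nlinarith
        _ = 1 := hkδ
    have h0 : 0 ≤ (i : ℝ) * δ := by positivity
    have := hconv h00A h01A h0 (by linarith : (0:ℝ) ≤ 1 - (i:ℝ)*δ) (by ring)
    simpa using this
  have hbdd : ∀ c : ℝ, BddAbove {x : ℝ | (x, c) ∈ A} := by
    intro c
    have himg : BddAbove (Prod.fst '' A) := (hcomp.image continuous_fst).bddAbove
    have hsub : {x : ℝ | (x, c) ∈ A} ⊆ Prod.fst '' A := fun x hx => ⟨(x, c), hx, rfl⟩
    exact BddAbove.mono hsub himg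
  have hmem : ∀ i : ℕ, i ≤ k → ((r i), 1 - (i : ℝ) * δ) ∈ A := by
    intro i hik
    have hclosed : IsClosed {x : ℝ | (x, 1 - (i : ℝ) * δ) ∈ A} :=
      hA_closed.preimage (continuous_id.prodMk continuous_const)
    have hne : Set.Nonempty {x : ℝ | (x, 1 - (i : ℝ) * δ) ∈ A} := ⟨0, h0mem i hik⟩
    exact hclosed.csSup_mem hne (hbdd _)
  have hr0 : ∀ i : ℕ, i ≤ k → 0 ≤ r i := fun i hik => le_csSup (hbdd _) (h0mem i hik)
  have hmono : ∀ i j : ℕ, i ≤ j → j ≤ k → r i ≤ r j := by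
    intro i j hij hjk
    rcases eq_or_lt_of_le hij with rfl | hlt
    · exact le_rfl
    · set a : ℝ := 1 - (i : ℝ) * δ with ha_def
      set b : ℝ := 1 - (j : ℝ) * δ with hb_def
      have hjk' : (j : ℝ) ≤ k := by exact_mod_cast hjk
      have hb0 : 0 ≤ b := by
        have : (j : ℝ) * δ ≤ (k : ℝ) * δ := by nlinarith
        rw [hb_def]; linarith [hkδ]
      have hij' : (i : ℝ) < j := by exact_mod_cast hlt
      have hab : b < a := by rw [ha_def, hb_def]; nlinarith
      have ha0 : 0 < a := lt_of_le_of_lt hb0 hab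
      have ha' : a ≠ 0 := ne_of_gt ha0
      have hp1 : ((r i), a) ∈ A := hmem i (hij.trans hjk)
      have hp2 : ((r i), -a) ∈ A := hsymmy _ hp1
      have hc1 : 0 ≤ (a + b) / (2 * a) := by positivity
      have hc2 : 0 ≤ (a - b) / (2 * a) := by
        apply div_nonneg (by linarith) (by linarith)
      have hcs : (a + b) / (2 * a) + (a - b) / (2 * a) = 1 := by field_simp; ring
      have hcomb := hconv hp1 hp2 hc1 hc2 hcs
      have heq : ((a + b) / (2 * a)) • ((r i), a) + ((a - b) / (2 * a)) • ((r i), -a)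
          = ((r i), b) := by
        simp only [Prod.smul_mk, Prod.mk_add_mk, smul_eq_mul, Prod.mk.injEq]
        constructor
        · field_simp; ring
        · field_simp; ring
      rw [heq] at hcomb
      exact le_csSup (hbdd _) hcomb
  have hconc' : ∀ p : ℕ, p + 2 ≤ k → r p + r (p + 2) ≤ 2 * r (p + 1) := by
    intro p hp
    have h1 := hmem p (by omega)
    have h2 := hmem (p + 2) hp
    have hmid := hconv h1 h2 (by norm_num : (0:ℝ) ≤ 1/2) (by norm_num : (0:ℝ) ≤ 1/2)
      (by norm_num)
    have heq : (1/2 : ℝ) • ((r p), 1 - (p : ℝ) * δ)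
        + (1/2 : ℝ) • ((r (p+2)), 1 - ((p+2 : ℕ) : ℝ) * δ)
        = ((r p + r (p+2)) / 2, 1 - ((p+1 : ℕ) : ℝ) * δ) := by
      simp only [Prod.smul_mk, Prod.mk_add_mk, smul_eq_mul, Prod.mk.injEq]
      constructor
      · ring
      · push_cast; ring
    rw [heq] at hmid
    have hle : (r p + r (p+2)) / 2 ≤ r (p+1) := le_csSup (hbdd _) hmid
    linarith
  have hchain : ∀ j i : ℕ, j ≤ i → i + 1 ≤ k → r (i+1) - r i ≤ r (j+1) - r j := by
    intro j i hji
    induction i, hji using Nat.le_induction with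
    | base => intro _; exact le_rfl
    | succ n hjn ih =>
      intro hk'
      have h1 := hconc' n (by omega)
      have h2 := ih (by omega)
      have e : n + 1 + 1 = n + 2 := rfl
      rw [e]
      linarith
  have hsum : ∀ n m : ℕ, n ≤ m + 1 → m + 1 ≤ k →
      (n : ℝ) * (r (m+1) - r m) ≤ r n - r 0 := by
    intro n
    induction n with
    | zero => intro m _ _; simp
    | succ n ih =>
      intro m hn hm
      have h1 := ih m (by omega) hm
      have h2 := hchain n m (by omega) hm
      push_cast
      rw [show ((n:ℝ) + 1) * (r (m+1) - r m)
          = (n:ℝ) * (r (m+1) - r m) + (r (m+1) - r m) from by ring]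
      linarith
  constructor
  · intro i h1 hik
    obtain ⟨q, rfl⟩ : ∃ q, i = q + 1 := ⟨i - 1, by omega⟩
    have h := hconc' q (by omega)
    have e1 : L (q + 1 + 1) = r (q + 2) - r (q + 1) := by
      rw [hLdef, if_neg (by omega : ¬(q + 1 + 1 = 0)),
        (by omega : q + 1 + 1 - 1 = q + 1), (by omega : q + 1 + 1 = q + 2)]
    have e2 : L (q + 1) = r (q + 1) - r q := by
      rw [hLdef, if_neg (by omega : ¬(q + 1 = 0)), (by omega : q + 1 - 1 = q)]
    rw [e1, e2]
    linarith
  · intro i hi1 hik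
    have hs : 0 < Real.sqrt δ := Real.sqrt_pos.mpr hδ0
    have hsq : Real.sqrt δ * Real.sqrt δ = δ := Real.mul_self_sqrt hδ0.le
    have hs2 : Real.sqrt δ < 1/2 := by
      have h := Real.sqrt_lt_sqrt hδ0.le hδ4
      rwa [show Real.sqrt (1/4) = 1/2 from by
        rw [show (1/4 : ℝ) = (1/2)^2 by norm_num, Real.sqrt_sq (by norm_num : (0:ℝ) ≤ 1/2)]] at h
    have hinv : 2 < 1 / Real.sqrt δ := by
      rw [lt_div_iff₀ hs]; linarith
    have hi4 : 4 ≤ i := by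
      have h3 : (3 : ℝ) < (i : ℝ) := by linarith
      have : 3 < i := by exact_mod_cast h3
      omega
    have hk5 : 5 ≤ k := by
      have h4k : (4 : ℝ) < (k : ℝ) := by
        rw [hk, lt_div_iff₀ hδ0]; linarith
      have : 4 < k := by exact_mod_cast h4k
      omega
    obtain ⟨p, rfl⟩ : ∃ p, i = p + 4 := ⟨i - 4, by omega⟩
    have hpk : p + 5 ≤ k := by omega
    have hi3 : 1 / Real.sqrt δ ≤ (p : ℝ) + 3 := by push_cast at hi1; linarith
    -- L values
    have eA : L (p + 4) = r (p + 4) - r (p + 3) := by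
      rw [hLdef, if_neg (by omega : ¬(p + 4 = 0)), (by omega : p + 4 - 1 = p + 3)]
    have eB : L (p + 4 + 1) = r (p + 5) - r (p + 4) := by
      rw [hLdef, if_neg (by omega : ¬(p + 4 + 1 = 0)),
        (by omega : p + 4 + 1 - 1 = p + 4), (by omega : p + 4 + 1 = p + 5)]
    have eC : L (p + 4 - 1) = r (p + 3) - r (p + 2) := by
      rw [hLdef, if_neg (by omega : ¬(p + 4 - 1 = 0)),
        (by omega : p + 4 - 1 - 1 = p + 2), (by omega : p + 4 - 1 = p + 3)]
    have eD : r (p + 4 - 1) = r (p + 3) := by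
      rw [(by omega : p + 4 - 1 = p + 3)]
    -- basic bounds
    have hr30 : 0 ≤ r (p + 3) := hr0 _ (by omega)
    have hr00 : 0 ≤ r 0 := hr0 _ (by omega)
    have hm34 : r (p + 3) ≤ r (p + 4) := hmono _ _ (by omega) (by omega)
    have hm45 : r (p + 4) ≤ r (p + 5) := hmono _ _ (by omega) (by omega)
    have hm23 : r (p + 2) ≤ r (p + 3) := hmono _ _ (by omega) (by omega)
    have hr40 : 0 ≤ r (p + 4) := le_trans hr30 hm34
    -- key bound: L (p+4) ≤ √δ * r (p+3)
    have hd1 : ((p : ℝ) + 3) * (r (p + 4) - r (p + 3)) ≤ r (p + 3) - r 0 := by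
      have h := hsum (p + 3) (p + 3) (by omega) (by omega)
      rw [show p + 3 + 1 = p + 4 from rfl] at h
      push_cast at h
      linarith
    have hdb : r (p + 4) - r (p + 3) ≤ Real.sqrt δ * r (p + 3) := by
      have hd0 : 0 ≤ r (p + 4) - r (p + 3) := by linarith
      have h1 : (1 / Real.sqrt δ) * (r (p + 4) - r (p + 3)) ≤ r (p + 3) := by
        calc (1 / Real.sqrt δ) * (r (p + 4) - r (p + 3))
            ≤ ((p : ℝ) + 3) * (r (p + 4) - r (p + 3)) :=
              mul_le_mul_of_nonneg_right hi3 hd0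
          _ ≤ r (p + 3) - r 0 := hd1
          _ ≤ r (p + 3) := by linarith
      have h2 := mul_le_mul_of_nonneg_left h1 hs.le
      rwa [show Real.sqrt δ * ((1 / Real.sqrt δ) * (r (p + 4) - r (p + 3)))
          = r (p + 4) - r (p + 3) from by field_simp] at h2
    -- key bound: L (p+3) ≤ √δ * r (p+3)
    have he1 : ((p : ℝ) + 3) * (r (p + 3) - r (p + 2)) ≤ r (p + 3) - r 0 := by
      have h := hsum (p + 3) (p + 2) (by omega) (by omega)
      rw [show p + 2 + 1 = p + 3 from rfl] at h
      push_cast at h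
      linarith
    have heb : r (p + 3) - r (p + 2) ≤ Real.sqrt δ * r (p + 3) := by
      have he0 : 0 ≤ r (p + 3) - r (p + 2) := by linarith
      have h1 : (1 / Real.sqrt δ) * (r (p + 3) - r (p + 2)) ≤ r (p + 3) := by
        calc (1 / Real.sqrt δ) * (r (p + 3) - r (p + 2))
            ≤ ((p : ℝ) + 3) * (r (p + 3) - r (p + 2)) :=
              mul_le_mul_of_nonneg_right hi3 he0
          _ ≤ r (p + 3) - r 0 := he1
          _ ≤ r (p + 3) := by linarith
      have h2 := mul_le_mul_of_nonneg_left h1 hs.le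
      rwa [show Real.sqrt δ * ((1 / Real.sqrt δ) * (r (p + 3) - r (p + 2)))
          = r (p + 3) - r (p + 2) from by field_simp] at h2
    rw [eD, eA, eB, eC, hωdef]
    have f1 : 2 * δ * (r (p + 4) - r (p + 3)) ≤ 2 * δ * (Real.sqrt δ * r (p + 3)) :=
      mul_le_mul_of_nonneg_left hdb (by positivity)
    have f2 : 2 * δ * (Real.sqrt δ * r (p + 3)) ≤ δ * r (p + 3) := by
      have h := mul_nonneg (by linarith : (0:ℝ) ≤ 1 - 2 * Real.sqrt δ)
        (mul_nonneg hδ0.le hr30)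
      linarith [h]
    have f3 : Real.sqrt δ * r (p + 3) ≤ Real.sqrt δ * r (p + 4) :=
      mul_le_mul_of_nonneg_left hm34 hs.le
    have f4 : 2 * δ * r (p + 3) ≤ 2 * δ * r (p + 4) :=
      mul_le_mul_of_nonneg_left hm34 (by positivity)
    have f5 : (0:ℝ) ≤ δ * r (p + 3) := mul_nonneg hδ0.le hr30
    have f6 : (0:ℝ) ≤ δ * r (p + 4) := mul_nonneg hδ0.le hr40
    constructor
    · linarith [f1, f2, hdb, hm45, f5]
    · linarith [heb, f3, f4, f6, hm34]
end

section
/- Let 0 < δ < 1/4 and 0 < r₁ ≤ 1, and set α = ((1+δ)r₁ − δ)/((1 − 2δ − δ²)r₁ + δ) (assume the denominator is positive). Then 1 + 4δ + δ^{1/2} ≥ α, and moreover (1 − δ)(4δ + δ^{1/2}) ≥ δ(1 + α). -/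
open Real

lemma aux_key (s r₁ : ℝ) (hs0 : 0 < s) (hs2 : s < 1/2) (hr₁0 : 0 < r₁) (hr₁1 : r₁ ≤ 1) :
    (1 + s^2) * r₁ - s^2 ≤ (1 + 4 * s^2 + s) * ((1 - 2 * s^2 - (s^2)^2) * r₁ + s^2) := by
  have key : (1 + 4*s^2 + s) * ((1 - 2*s^2 - (s^2)^2) * r₁ + s^2) - ((1 + s^2) * r₁ - s^2)
      = r₁ * (s + s^2 - 2*s^3 - 9*s^4 - s^5 - 4*s^6) + 2*s^2 + s^3 + 4*s^4 := by ring
  set B : ℝ := s + s^2 - 2*s^3 - 9*s^4 - s^5 - 4*s^6 with hB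
  rcases le_or_gt 0 B with hBpos | hBneg
  · nlinarith [mul_nonneg hr₁0.le hBpos, pow_pos hs0 2, pow_pos hs0 3, pow_pos hs0 4]
  · have hrB : r₁ * B ≥ B := by nlinarith
    nlinarith [pow_pos hs0 2, pow_pos hs0 3, pow_pos hs0 4, pow_pos hs0 5, pow_pos hs0 6,
      sq_nonneg (1 - 2*s), mul_pos (mul_pos hs0 hs0) (sub_pos.mpr hs2),
      mul_pos (mul_pos (mul_pos hs0 hs0) (mul_pos hs0 hs0)) (sub_pos.mpr hs2)]

/-- The inequalities \eqref{E:xR0} and \eqref{E:yR0}: the corner point R₀ in the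
sharp-top case is covered by the (1+ω(δ))-dilation. -/
theorem stmt_9
    (δ r₁ : ℝ) (hδ0 : 0 < δ) (hδ4 : δ < 1 / 4)
    (hr₁0 : 0 < r₁) (hr₁1 : r₁ ≤ 1)
    (hden : 0 < (1 - 2 * δ - δ ^ 2) * r₁ + δ) :
    let α : ℝ := ((1 + δ) * r₁ - δ) / ((1 - 2 * δ - δ ^ 2) * r₁ + δ)
    1 + 4 * δ + Real.sqrt δ ≥ α ∧
    (1 - δ) * (4 * δ + Real.sqrt δ) ≥ δ * (1 + α) := by
  intro α
  set s := Real.sqrt δ with hs_def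
  have hs : s ^ 2 = δ := Real.sq_sqrt hδ0.le
  have hs0 : 0 < s := Real.sqrt_pos.mpr hδ0
  have hs2 : s < 1 / 2 := by
    rw [hs_def, show (1/2 : ℝ) = Real.sqrt (1/4) by
      rw [show (1/4 : ℝ) = (1/2)^2 by norm_num, Real.sqrt_sq (by norm_num)]]
    exact Real.sqrt_lt_sqrt hδ0.le hδ4
  have h1 : 1 + 4 * δ + s ≥ α := by
    rw [ge_iff_le, show α = ((1 + δ) * r₁ - δ) / ((1 - 2 * δ - δ ^ 2) * r₁ + δ) from rfl,
      div_le_iff₀ hden, ← hs]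
    exact aux_key s r₁ hs0 hs2 hr₁0 hr₁1
  refine ⟨h1, ?_⟩
  have h2 : δ * (1 + α) ≤ δ * (2 + 4 * δ + s) := by nlinarith
  refine le_trans h2 ?_
  rw [← hs]
  nlinarith [pow_pos hs0 3, pow_pos hs0 4, sq_nonneg (1 - 2*s), mul_pos hs0 hs0,
    mul_pos (mul_pos hs0 hs0) (sub_pos.mpr hs2),
    mul_pos (mul_pos (mul_pos hs0 hs0) (mul_pos hs0 hs0)) (sub_pos.mpr hs2)]
end

section
/- Let Y be a normed space, Z = (ℝ², ‖·‖_Z) a space with normalized 1-unconditional basis, and X = Y ⊕_Z Y with ‖(u,v)‖_X = ‖(‖u‖_Y, ‖v‖_Y)‖_Z. Fix ε ∈ (0,1), r > 0, and R determined by (ε/c_Z)·ln(R/r) = π/2, where c_Z is the Lipschitz constant of the normalized curve u(τ) = (cos τ, sin τ)/‖(cos τ, sin τ)‖_Z on [0, π/2]. Define τ(t) = (ε/c_Z)·ln(t/r) for t ∈ [r,R], c(x) = cos τ(‖x‖)/‖(cos τ(‖x‖), sin τ(‖x‖))‖_Z and s(x) = sin τ(‖x‖)/‖(cos τ(‖x‖),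 sin τ(‖x‖))‖_Z for r ≤ ‖x‖ ≤ R, with c(x)=1, s(x)=0 for ‖x‖ ≤ r and c(x)=0, s(x)=1 for ‖x‖ ≥ R, and T x = (c(x)x, s(x)x). Then ‖Tx‖_X = ‖x‖_Y for all x ∈ Y, and (1−ε)‖x−y‖_Y ≤ ‖Tx − Ty‖_X ≤ (1+ε)‖x−y‖_Y for all x, y ∈ Y. In particular T is a ((1+ε)/(1−ε))-bilipschitz embedding coinciding with y ↦ (y,0) on the ball of radius r and with y ↦ (0,y) outside the ball of radius R. -/
open Real

section AuxBend

variable (nZ : ℝ × ℝ → ℝ)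

lemma bendNZ_zero (hN_smul : ∀ (t : ℝ) p, nZ (t • p) = |t| * nZ p) : nZ 0 = 0 := by
  simpa using hN_smul 0 0

lemma bendNZ_neg (hN_smul : ∀ (t : ℝ) p, nZ (t • p) = |t| * nZ p) (p : ℝ × ℝ) :
    nZ (-p) = nZ p := by
  simpa using hN_smul (-1) p

lemma bendNZ_nonneg (hN_add : ∀ p q, nZ (p + q) ≤ nZ p + nZ q)
    (hN_smul : ∀ (t : ℝ) p, nZ (t • p) = |t| * nZ p) (p : ℝ × ℝ) : 0 ≤ nZ p := by
  have h := hN_add p (-p)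
  rw [add_neg_cancel, bendNZ_zero nZ hN_smul, bendNZ_neg nZ hN_smul] at h
  linarith

lemma bendNZ_abs (huncond : ∀ a b : ℝ, nZ (-a, b) = nZ (a, b) ∧ nZ (a, -b) = nZ (a, b))
    (a b : ℝ) : nZ (|a|, |b|) = nZ (a, b) := by
  rcases abs_cases a with ⟨ha, _⟩ | ⟨ha, _⟩ <;> rcases abs_cases b with ⟨hb, _⟩ | ⟨hb, _⟩ <;>
    rw [ha, hb]
  · exact (huncond a b).2
  · exact (huncond a b).1
  · rw [(huncond a (-b)).1, (huncond a b).2]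

lemma bendNZ_mono_fst (hN_add : ∀ p q, nZ (p + q) ≤ nZ p + nZ q)
    (hN_smul : ∀ (t : ℝ) p, nZ (t • p) = |t| * nZ p)
    (huncond : ∀ a b : ℝ, nZ (-a, b) = nZ (a, b) ∧ nZ (a, -b) = nZ (a, b))
    (a a' b : ℝ) (h0 : 0 ≤ a) (h : a ≤ a') : nZ (a, b) ≤ nZ (a', b) := by
  rcases eq_or_lt_of_le (h0.trans h) with h' | h'
  · have ha : a = 0 := le_antisymm (h.trans h'.ge) h0
    rw [ha, ← h']
  · set l : ℝ := (a' + a) / (2 * a') with hl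
    have hl0 : 0 ≤ l := by positivity
    have hl1 : l ≤ 1 := by
      rw [hl, div_le_one (by linarith)]; linarith
    have hid : (a, b) = l • ((a', b) : ℝ × ℝ) + (1 - l) • ((-a', b) : ℝ × ℝ) := by
      have h1 : l * a' + (1 - l) * (-a') = a := by
        field_simp [hl]; rw [hl]; field_simp; ring
      have h2 : l * b + (1 - l) * b = b := by ring
      simp only [Prod.smul_mk, smul_eq_mul, Prod.mk_add_mk]
      exact Prod.ext h1.symm h2.symm
    calc nZ (a, b) ≤ nZ (l • ((a', b) : ℝ × ℝ)) + nZ ((1 - l) • ((-a', b) : ℝ × ℝ)) := by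
          rw [hid] at *; exact hN_add _ _
      _ = l * nZ (a', b) + (1 - l) * nZ (-a', b) := by
          rw [hN_smul, hN_smul, abs_of_nonneg hl0, abs_of_nonneg (by linarith)]
      _ = nZ (a', b) := by rw [(huncond a' b).1]; ring

lemma bendNZ_mono_snd (hN_add : ∀ p q, nZ (p + q) ≤ nZ p + nZ q)
    (hN_smul : ∀ (t : ℝ) p, nZ (t • p) = |t| * nZ p)
    (huncond : ∀ a b : ℝ, nZ (-a, b) = nZ (a, b) ∧ nZ (a, -b) = nZ (a, b))
    (a b b' : ℝ) (h0 : 0 ≤ b) (h : b ≤ b') : nZ (a, b) ≤ nZ (a, b') := by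
  rcases eq_or_lt_of_le (h0.trans h) with h' | h'
  · have hb : b = 0 := le_antisymm (h.trans h'.ge) h0
    rw [hb, ← h']
  · set l : ℝ := (b' + b) / (2 * b') with hl
    have hl0 : 0 ≤ l := by positivity
    have hl1 : l ≤ 1 := by
      rw [hl, div_le_one (by linarith)]; linarith
    have hid : (a, b) = l • ((a, b') : ℝ × ℝ) + (1 - l) • ((a, -b') : ℝ × ℝ) := by
      have h1 : l * b' + (1 - l) * (-b') = b := by
        field_simp [hl]; rw [hl]; field_simp; ring
      have h2 : l * a + (1 - l) * a = a := by ring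
      simp only [Prod.smul_mk, smul_eq_mul, Prod.mk_add_mk]
      exact Prod.ext h2.symm h1.symm
    calc nZ (a, b) ≤ nZ (l • ((a, b') : ℝ × ℝ)) + nZ ((1 - l) • ((a, -b') : ℝ × ℝ)) := by
          rw [hid] at *; exact hN_add _ _
      _ = l * nZ (a, b') + (1 - l) * nZ (a, -b') := by
          rw [hN_smul, hN_smul, abs_of_nonneg hl0, abs_of_nonneg (by linarith)]
      _ = nZ (a, b') := by rw [(huncond a b').2]; ring

lemma bendNZ_mono (hN_add : ∀ p q, nZ (p + q) ≤ nZ p + nZ q)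
    (hN_smul : ∀ (t : ℝ) p, nZ (t • p) = |t| * nZ p)
    (huncond : ∀ a b : ℝ, nZ (-a, b) = nZ (a, b) ∧ nZ (a, -b) = nZ (a, b))
    (a a' b b' : ℝ) (ha0 : 0 ≤ a) (ha : a ≤ a') (hb0 : 0 ≤ b) (hb : b ≤ b') :
    nZ (a, b) ≤ nZ (a', b') :=
  (bendNZ_mono_fst nZ hN_add hN_smul huncond a a' b ha0 ha).trans
    (bendNZ_mono_snd nZ hN_add hN_smul huncond a' b b' hb0 hb)

lemma bendNZ_le_sum (hN_add : ∀ p q, nZ (p + q) ≤ nZ p + nZ q)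
    (hN_smul : ∀ (t : ℝ) p, nZ (t • p) = |t| * nZ p)
    (h10 : nZ (1, 0) = 1) (h01 : nZ (0, 1) = 1) (a b : ℝ) : nZ (a, b) ≤ |a| + |b| := by
  have h1 : ((a, b) : ℝ × ℝ) = a • ((1, 0) : ℝ × ℝ) + b • ((0, 1) : ℝ × ℝ) := by
    simp [Prod.ext_iff]
  calc nZ (a, b) ≤ nZ (a • ((1, 0) : ℝ × ℝ)) + nZ (b • ((0, 1) : ℝ × ℝ)) := by
        rw [h1] at *; exact hN_add _ _
    _ = |a| + |b| := by rw [hN_smul, hN_smul, h10, h01]; ring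

lemma bendNZ_fst_le (hN_add : ∀ p q, nZ (p + q) ≤ nZ p + nZ q)
    (hN_smul : ∀ (t : ℝ) p, nZ (t • p) = |t| * nZ p)
    (huncond : ∀ a b : ℝ, nZ (-a, b) = nZ (a, b) ∧ nZ (a, -b) = nZ (a, b))
    (h10 : nZ (1, 0) = 1) (a b : ℝ) : |a| ≤ nZ (a, b) := by
  have h1 : nZ (|a|, 0) = |a| := by
    have : ((|a|, 0) : ℝ × ℝ) = |a| • ((1, 0) : ℝ × ℝ) := by simp
    rw [this, hN_smul, h10, abs_abs, mul_one]
  calc |a| = nZ (|a|, 0) := h1.symm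
    _ ≤ nZ (|a|, |b|) := bendNZ_mono_snd nZ hN_add hN_smul huncond _ _ _ le_rfl (abs_nonneg b)
    _ = nZ (a, b) := bendNZ_abs nZ huncond a b

lemma bendNZ_snd_le (hN_add : ∀ p q, nZ (p + q) ≤ nZ p + nZ q)
    (hN_smul : ∀ (t : ℝ) p, nZ (t • p) = |t| * nZ p)
    (huncond : ∀ a b : ℝ, nZ (-a, b) = nZ (a, b) ∧ nZ (a, -b) = nZ (a, b))
    (h01 : nZ (0, 1) = 1) (a b : ℝ) : |b| ≤ nZ (a, b) := by
  have h1 : nZ (0, |b|) = |b| := by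
    have : ((0, |b|) : ℝ × ℝ) = |b| • ((0, 1) : ℝ × ℝ) := by simp
    rw [this, hN_smul, h01, abs_abs, mul_one]
  calc |b| = nZ (0, |b|) := h1.symm
    _ ≤ nZ (|a|, |b|) := bendNZ_mono_fst nZ hN_add hN_smul huncond _ _ _ le_rfl (abs_nonneg a)
    _ = nZ (a, b) := bendNZ_abs nZ huncond a b

lemma bendNZ_sub_le (hN_add : ∀ p q, nZ (p + q) ≤ nZ p + nZ q)
    (p q : ℝ × ℝ) : nZ p - nZ q ≤ nZ (p - q) := by
  have := hN_add (p - q) q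
  rw [sub_add_cancel] at this
  linarith

end AuxBend


lemma bend_sin_lip (a b : ℝ) : |Real.sin a - Real.sin b| ≤ |a - b| := by
  rw [Real.sin_sub_sin]
  calc |2 * Real.sin ((a - b) / 2) * Real.cos ((a + b) / 2)|
      = 2 * |Real.sin ((a - b) / 2)| * |Real.cos ((a + b) / 2)| := by
        rw [abs_mul, abs_mul]; simp
    _ ≤ 2 * |(a - b) / 2| * 1 := by
        apply mul_le_mul _ (Real.abs_cos_le_one _) (abs_nonneg _) (by positivity)
        have := Real.abs_sin_le_abs (x := (a - b) / 2)
        nlinarith [abs_nonneg ((a-b)/2)]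
    _ = |a - b| := by rw [abs_div]; simp; ring

lemma bend_cos_lip (a b : ℝ) : |Real.cos a - Real.cos b| ≤ |a - b| := by
  rw [Real.cos_sub_cos]
  calc |-2 * Real.sin ((a + b) / 2) * Real.sin ((a - b) / 2)|
      = 2 * |Real.sin ((a + b) / 2)| * |Real.sin ((a - b) / 2)| := by
        rw [abs_mul, abs_mul]; simp [abs_of_nonneg]
    _ ≤ 2 * 1 * |(a - b) / 2| := by
        have h1 := Real.abs_sin_le_abs (x := (a - b) / 2)
        have h2 : |Real.sin ((a + b) / 2)| ≤ 1 := Real.abs_sin_le_one _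
        nlinarith [abs_nonneg ((a-b)/2), abs_nonneg (Real.sin ((a+b)/2)),
          abs_nonneg (Real.sin ((a-b)/2))]
    _ = |a - b| := by rw [abs_div]; simp; ring


section A3
variable (nZ : ℝ × ℝ → ℝ)
    (hN_add : ∀ p q, nZ (p + q) ≤ nZ p + nZ q)
    (hN_smul : ∀ (t : ℝ) p, nZ (t • p) = |t| * nZ p)
    (hN_def : ∀ p, nZ p = 0 → p = 0)
    (h10 : nZ (1, 0) = 1) (h01 : nZ (0, 1) = 1)
    (huncond : ∀ a b : ℝ, nZ (-a, b) = nZ (a, b) ∧ nZ (a, -b) = nZ (a, b))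

noncomputable def bendN (τ : ℝ) : ℝ := nZ (Real.cos τ, Real.sin τ)

noncomputable def bendU (τ : ℝ) : ℝ × ℝ :=
  (Real.cos τ / bendN nZ τ, Real.sin τ / bendN nZ τ)

include hN_add hN_smul hN_def in
lemma bendN_pos (τ : ℝ) : 0 < bendN nZ τ := by
  have h0 : 0 ≤ bendN nZ τ := bendNZ_nonneg nZ hN_add hN_smul _
  rcases h0.eq_or_lt with h | h
  · exfalso
    have := hN_def _ h.symm
    have hc : Real.cos τ = 0 := congrArg Prod.fst this
    have hs : Real.sin τ = 0 := congrArg Prod.snd this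
    nlinarith [Real.sin_sq_add_cos_sq τ]
  · exact h

include hN_add hN_smul hN_def in
lemma bendU_norm (τ : ℝ) : nZ (bendU nZ τ) = 1 := by
  have hN := bendN_pos nZ hN_add hN_smul hN_def τ
  have h1 : bendU nZ τ = (bendN nZ τ)⁻¹ • ((Real.cos τ, Real.sin τ) : ℝ × ℝ) := by
    simp [bendU, Prod.ext_iff, div_eq_inv_mul]
  rw [h1, hN_smul, abs_of_pos (inv_pos.2 hN)]
  exact inv_mul_cancel₀ hN.ne'

include hN_add hN_smul huncond h10 h01 in
lemma bendN_half (τ : ℝ) (h0 : 0 ≤ τ) (h2 : τ ≤ π / 2) : 1 / 2 ≤ bendN nZ τ := by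
  have hc : 0 ≤ Real.cos τ := Real.cos_nonneg_of_mem_Icc ⟨by linarith [Real.pi_pos], h2⟩
  have hs : 0 ≤ Real.sin τ := Real.sin_nonneg_of_nonneg_of_le_pi h0 (by linarith [Real.pi_pos])
  have h1 : Real.cos τ ≤ bendN nZ τ := by
    have := bendNZ_fst_le nZ hN_add hN_smul huncond h10 (Real.cos τ) (Real.sin τ)
    rwa [abs_of_nonneg hc] at this
  have h2' : Real.sin τ ≤ bendN nZ τ := by
    have := bendNZ_snd_le nZ hN_add hN_smul huncond h01 (Real.cos τ) (Real.sin τ)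
    rwa [abs_of_nonneg hs] at this
  nlinarith [Real.sin_sq_add_cos_sq τ, mul_nonneg hc hs]

include hN_add hN_smul h10 h01 in
lemma bendN_lip (τ₁ τ₂ : ℝ) : |bendN nZ τ₂ - bendN nZ τ₁| ≤ 2 * |τ₂ - τ₁| := by
  have key : ∀ a b : ℝ, bendN nZ a - bendN nZ b ≤ 2 * |a - b| := by
    intro a b
    have h1 := bendNZ_sub_le nZ hN_add ((Real.cos a, Real.sin a) : ℝ × ℝ)
      ((Real.cos b, Real.sin b) : ℝ × ℝ)
    have h2 : nZ ((Real.cos a, Real.sin a) - (Real.cos b, Real.sin b))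
        ≤ |Real.cos a - Real.cos b| + |Real.sin a - Real.sin b| := by
      rw [Prod.mk_sub_mk]
      exact bendNZ_le_sum nZ hN_add hN_smul h10 h01 _ _
    have h3 := bend_cos_lip a b
    have h4 := bend_sin_lip a b
    simp only [bendN] at *
    linarith
  rw [abs_sub_le_iff]
  refine ⟨key τ₂ τ₁, ?_⟩
  rw [abs_sub_comm]
  exact key τ₁ τ₂
end A3
section A4
variable (nZ : ℝ × ℝ → ℝ)
    (hN_add : ∀ p q, nZ (p + q) ≤ nZ p + nZ q)
    (hN_smul : ∀ (t : ℝ) p, nZ (t • p) = |t| * nZ p)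
    (hN_def : ∀ p, nZ p = 0 → p = 0)
    (h10 : nZ (1, 0) = 1) (h01 : nZ (0, 1) = 1)
    (huncond : ∀ a b : ℝ, nZ (-a, b) = nZ (a, b) ∧ nZ (a, -b) = nZ (a, b))

include hN_add hN_smul hN_def h10 h01 huncond in
lemma bendU_lip8 (τ₁ τ₂ : ℝ) (h1 : 0 ≤ τ₁) (h12 : τ₁ ≤ τ₂) (h2 : τ₂ ≤ π / 2) :
    nZ (bendU nZ τ₂ - bendU nZ τ₁) ≤ 8 * (τ₂ - τ₁) := by
  set N₁ := bendN nZ τ₁ with hN₁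
  set N₂ := bendN nZ τ₂ with hN₂
  have hp1 : 0 < N₁ := bendN_pos nZ hN_add hN_smul hN_def τ₁
  have hp2 : 0 < N₂ := bendN_pos nZ hN_add hN_smul hN_def τ₂
  have hh1 : 1 / 2 ≤ N₁ := bendN_half nZ hN_add hN_smul h10 h01 huncond τ₁ h1 (h12.trans h2)
  have hh2 : 1 / 2 ≤ N₂ := bendN_half nZ hN_add hN_smul h10 h01 huncond τ₂ (h1.trans h12) h2
  set v₁ : ℝ × ℝ := (Real.cos τ₁, Real.sin τ₁) with hv₁
  set v₂ : ℝ × ℝ := (Real.cos τ₂, Real.sin τ₂) with hv₂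
  have hu1 : bendU nZ τ₁ = N₁⁻¹ • v₁ := by
    simp [bendU, hv₁, Prod.ext_iff, div_eq_inv_mul, hN₁]
  have hu2 : bendU nZ τ₂ = N₂⁻¹ • v₂ := by
    simp [bendU, hv₂, Prod.ext_iff, div_eq_inv_mul, hN₂]
  have hid : bendU nZ τ₂ - bendU nZ τ₁ = N₂⁻¹ • (v₂ - v₁) + (N₂⁻¹ - N₁⁻¹) • v₁ := by
    rw [hu1, hu2, smul_sub, sub_smul]; abel
  have hvd : nZ (v₂ - v₁) ≤ 2 * (τ₂ - τ₁) := by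
    have h2' : nZ (v₂ - v₁) ≤ |Real.cos τ₂ - Real.cos τ₁| + |Real.sin τ₂ - Real.sin τ₁| := by
      rw [hv₁, hv₂, Prod.mk_sub_mk]
      exact bendNZ_le_sum nZ hN_add hN_smul h10 h01 _ _
    have h3 := bend_cos_lip τ₂ τ₁
    have h4 := bend_sin_lip τ₂ τ₁
    rw [abs_of_nonneg (by linarith : (0:ℝ) ≤ τ₂ - τ₁)] at h3 h4
    linarith
  have hNd : |N₂ - N₁| ≤ 2 * (τ₂ - τ₁) := by
    have := bendN_lip nZ hN_add hN_smul h10 h01 τ₁ τ₂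
    rwa [abs_of_nonneg (by linarith : (0:ℝ) ≤ τ₂ - τ₁)] at this
  have hnv1 : nZ v₁ = N₁ := rfl
  calc nZ (bendU nZ τ₂ - bendU nZ τ₁)
      ≤ nZ (N₂⁻¹ • (v₂ - v₁)) + nZ ((N₂⁻¹ - N₁⁻¹) • v₁) := by
        rw [hid]; exact hN_add _ _
    _ = N₂⁻¹ * nZ (v₂ - v₁) + |N₂⁻¹ - N₁⁻¹| * N₁ := by
        rw [hN_smul, hN_smul, hnv1, abs_of_pos (inv_pos.2 hp2)]
    _ ≤ 8 * (τ₂ - τ₁) := by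
        have hinv : |N₂⁻¹ - N₁⁻¹| * N₁ = |N₂ - N₁| / N₂ := by
          rw [inv_sub_inv hp2.ne' hp1.ne', abs_div, abs_of_pos (mul_pos hp2 hp1),
            abs_sub_comm]
          field_simp
        rw [hinv]
        have e1 : N₂⁻¹ * nZ (v₂ - v₁) ≤ 2 * (2 * (τ₂ - τ₁)) := by
          have : N₂⁻¹ ≤ 2 := by
            rw [inv_le_comm₀ hp2 (by norm_num)]; linarith
          have h0 : 0 ≤ nZ (v₂ - v₁) := bendNZ_nonneg nZ hN_add hN_smul _
          nlinarith
        have e2 : |N₂ - N₁| / N₂ ≤ 2 * (2 * (τ₂ - τ₁)) := by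
          rw [div_le_iff₀ hp2]
          nlinarith [abs_nonneg (N₂ - N₁)]
        linarith

end A4
section A5
open Real
variable (nZ : ℝ × ℝ → ℝ)
    (hN_add : ∀ p q, nZ (p + q) ≤ nZ p + nZ q)
    (hN_smul : ∀ (t : ℝ) p, nZ (t • p) = |t| * nZ p)
    (hN_def : ∀ p, nZ p = 0 → p = 0)
    (h10 : nZ (1, 0) = 1) (h01 : nZ (0, 1) = 1)
    (huncond : ∀ a b : ℝ, nZ (-a, b) = nZ (a, b) ∧ nZ (a, -b) = nZ (a, b))

noncomputable def bendS : Set ℝ :=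
  {q | ∃ τ₁ τ₂ : ℝ, 0 ≤ τ₁ ∧ τ₁ < τ₂ ∧ τ₂ ≤ π / 2 ∧
    q = nZ (bendU nZ τ₂ - bendU nZ τ₁) / (τ₂ - τ₁)}

include hN_add hN_smul hN_def h10 h01 huncond in
lemma bendS_bdd : BddAbove (bendS nZ) := by
  refine ⟨8, ?_⟩
  rintro q ⟨τ₁, τ₂, h1, h2, h3, rfl⟩
  rw [div_le_iff₀ (by linarith)]
  exact bendU_lip8 nZ hN_add hN_smul hN_def h10 h01 huncond τ₁ τ₂ h1 h2.le h3

include hN_add hN_smul hN_def h10 h01 huncond in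
lemma bend_cZ_ge (cZ : ℝ) (hcZ : cZ = sSup (bendS nZ)) : 2 / π ≤ cZ := by
  have hmem : nZ (bendU nZ (π / 2) - bendU nZ 0) / (π / 2 - 0) ∈ bendS nZ :=
    ⟨0, π / 2, le_rfl, by positivity, le_rfl, rfl⟩
  have hle := le_csSup (bendS_bdd nZ hN_add hN_smul hN_def h10 h01 huncond) hmem
  rw [← hcZ] at hle
  have hu0 : bendU nZ 0 = ((1, 0) : ℝ × ℝ) := by
    simp [bendU, bendN, h10]
  have hu2 : bendU nZ (π / 2) = ((0, 1) : ℝ × ℝ) := by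
    simp [bendU, bendN, h01]
  have hval : (1:ℝ) ≤ nZ (bendU nZ (π / 2) - bendU nZ 0) := by
    rw [hu0, hu2]
    have := bendNZ_fst_le nZ hN_add hN_smul huncond h10 (-1) 1
    simpa using this
  have hπ : (0:ℝ) < π := Real.pi_pos
  calc 2 / π = 1 / (π / 2 - 0) := by rw [sub_zero]; field_simp
    _ ≤ nZ (bendU nZ (π / 2) - bendU nZ 0) / (π / 2 - 0) := by
        exact (div_le_div_iff_of_pos_right (by rw [sub_zero]; positivity)).2 hval
    _ ≤ cZ := hle

end A5
section A6
open Real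
variable (nZ : ℝ × ℝ → ℝ)
    (hN_add : ∀ p q, nZ (p + q) ≤ nZ p + nZ q)
    (hN_smul : ∀ (t : ℝ) p, nZ (t • p) = |t| * nZ p)
    (hN_def : ∀ p, nZ p = 0 → p = 0)
    (h10 : nZ (1, 0) = 1) (h01 : nZ (0, 1) = 1)
    (huncond : ∀ a b : ℝ, nZ (-a, b) = nZ (a, b) ∧ nZ (a, -b) = nZ (a, b))

include hN_add hN_smul hN_def h10 h01 huncond in
lemma bendU_lipC (cZ : ℝ) (hcZ : cZ = sSup (bendS nZ)) (τ₁ τ₂ : ℝ)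
    (h1 : 0 ≤ τ₁) (h12 : τ₁ ≤ τ₂) (h2 : τ₂ ≤ π / 2) :
    nZ (bendU nZ τ₂ - bendU nZ τ₁) ≤ cZ * (τ₂ - τ₁) := by
  rcases h12.eq_or_lt with h | h
  · rw [h, sub_self, sub_self, mul_zero, bendNZ_zero nZ hN_smul]
  · have hmem : nZ (bendU nZ τ₂ - bendU nZ τ₁) / (τ₂ - τ₁) ∈ bendS nZ :=
      ⟨τ₁, τ₂, h1, h, h2, rfl⟩
    have hle := le_csSup (bendS_bdd nZ hN_add hN_smul hN_def h10 h01 huncond) hmem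
    rw [← hcZ] at hle
    rw [div_le_iff₀ (by linarith)] at hle
    linarith [hle]

lemma bend_clamp_mono : Monotone (fun x : ℝ => min (π / 2) (max 0 x)) :=
  fun _ _ h => min_le_min le_rfl (max_le_max le_rfl h)

lemma bend_clamp_lip (A B : ℝ) (h : B ≤ A) :
    min (π / 2) (max 0 A) - min (π / 2) (max 0 B) ≤ A - B := by
  have h1 : |min (π / 2) (max 0 A) - min (π / 2) (max 0 B)| ≤ |max 0 A - max 0 B| := by
    simpa using abs_min_sub_min_le_max (π / 2) (max 0 A) (π / 2) (max 0 B)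
  have h2 : |max 0 A - max 0 B| ≤ |A - B| := by
    have := abs_max_sub_max_le_abs A B 0
    simpa [max_comm] using this
  have h3 := (abs_le.1 (h1.trans h2)).2
  have h4 : |A - B| = A - B := abs_of_nonneg (by linarith)
  linarith [h3, h4.le]
end A6
/-- Theorem `T:BendDetail`: the logarithmic-spiral bending map T x = (c(x)x, s(x)x)
of Y into X = Y ⊕_Z Y is norm-preserving, (1±ε)-bilipschitz, coincides with
y ↦ (y,0) on the ball of radius r and with y ↦ (0,y) outside the ball of radius R. -/
theorem stmt_10
    {Y : Type*} [NormedAddCommGroup Y] [NormedSpace ℝ Y]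
    (nZ : ℝ × ℝ → ℝ)
    (hN_add : ∀ p q, nZ (p + q) ≤ nZ p + nZ q)
    (hN_smul : ∀ (t : ℝ) p, nZ (t • p) = |t| * nZ p)
    (hN_def : ∀ p, nZ p = 0 → p = 0)
    (h10 : nZ (1, 0) = 1) (h01 : nZ (0, 1) = 1)
    (huncond : ∀ a b : ℝ, nZ (-a, b) = nZ (a, b) ∧ nZ (a, -b) = nZ (a, b))
    (cZ : ℝ)
    (hcZ : cZ = sSup {q | ∃ τ₁ τ₂ : ℝ, 0 ≤ τ₁ ∧ τ₁ < τ₂ ∧ τ₂ ≤ π / 2 ∧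
      q = nZ ((Real.cos τ₂ / nZ (Real.cos τ₂, Real.sin τ₂),
               Real.sin τ₂ / nZ (Real.cos τ₂, Real.sin τ₂)) -
              (Real.cos τ₁ / nZ (Real.cos τ₁, Real.sin τ₁),
               Real.sin τ₁ / nZ (Real.cos τ₁, Real.sin τ₁))) / (τ₂ - τ₁)})
    (ε r R : ℝ) (hε0 : 0 < ε) (hε1 : ε < 1) (hr : 0 < r) (hrR : r < R)
    (hR : ε / cZ * Real.log (R / r) = π / 2) :
    let τf : ℝ → ℝ := fun t => ε / cZ * Real.log (t / r)
    let cf : ℝ → ℝ := fun t =>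
      if t ≤ r then 1 else if R ≤ t then 0 else
        Real.cos (τf t) / nZ (Real.cos (τf t), Real.sin (τf t))
    let sf : ℝ → ℝ := fun t =>
      if t ≤ r then 0 else if R ≤ t then 1 else
        Real.sin (τf t) / nZ (Real.cos (τf t), Real.sin (τf t))
    let T : Y → Y × Y := fun x => (cf ‖x‖ • x, sf ‖x‖ • x)
    let NX : Y × Y → ℝ := fun p => nZ (‖p.1‖, ‖p.2‖)
    (∀ x : Y, NX (T x) = ‖x‖) ∧
    (∀ x y : Y, (1 - ε) * ‖x - y‖ ≤ NX (T x - T y) ∧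
      NX (T x - T y) ≤ (1 + ε) * ‖x - y‖) ∧
    (∀ x : Y, ‖x‖ ≤ r → T x = (x, 0)) ∧
    (∀ x : Y, R ≤ ‖x‖ → T x = (0, x)) := by
  intro τf cf sf T NX
  have hcZ' : cZ = sSup (bendS nZ) := hcZ
  have hcZpos : 0 < cZ :=
    lt_of_lt_of_le (by positivity)
      (bend_cZ_ge nZ hN_add hN_smul hN_def h10 h01 huncond cZ hcZ')
  have hεc : 0 ≤ ε / cZ := by positivity
  set g : ℝ → ℝ := fun t => min (π / 2) (max 0 (τf t)) with hgdef
  have hπ2 : (0:ℝ) ≤ π / 2 := by positivity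
  have hg0 : ∀ t, 0 ≤ g t := fun t => le_min hπ2 (le_max_left 0 _)
  have hg2 : ∀ t, g t ≤ π / 2 := fun t => min_le_left _ _
  -- the pair (cf t, sf t) is the normalized curve at the clamped parameter
  have hF : ∀ t : ℝ, 0 ≤ t → ((cf t, sf t) : ℝ × ℝ) = bendU nZ (g t) := by
    intro t ht
    by_cases htr : t ≤ r
    · have hτ : τf t ≤ 0 := by
        rcases ht.eq_or_lt with h | h
        · simp [τf, ← h]
        · have : Real.log (t / r) ≤ 0 :=
            Real.log_nonpos (by positivity) ((div_le_one hr).2 htr)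
          exact mul_nonpos_of_nonneg_of_nonpos hεc this
      have hgt : g t = 0 := by
        simp only [hgdef]
        rw [max_eq_left hτ, min_eq_right hπ2]
      rw [hgt]
      simp [cf, sf, htr, bendU, bendN, h10]
    · have htpos : 0 < t := lt_of_lt_of_le hr (le_of_not_ge htr)
      have hrt : r < t := lt_of_not_ge htr
      by_cases htR : R ≤ t
      · have hτ : π / 2 ≤ τf t := by
          rw [← hR]
          have : Real.log (R / r) ≤ Real.log (t / r) :=
            Real.log_le_log (div_pos (hr.trans hrR) hr) (by gcongr)
          exact mul_le_mul_of_nonneg_left this hεc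
        have hgt : g t = π / 2 := by
          simp only [hgdef]
          rw [max_eq_right (hπ2.trans hτ), min_eq_left hτ]
        rw [hgt]
        simp [cf, sf, htr, htR, bendU, bendN, h01]
      · have hτ0 : 0 ≤ τf t :=
          mul_nonneg hεc (Real.log_nonneg ((one_le_div hr).2 hrt.le))
        have hτ2 : τf t ≤ π / 2 := by
          rw [← hR]
          have : Real.log (t / r) ≤ Real.log (R / r) :=
            Real.log_le_log (div_pos htpos hr) (by gcongr; exact le_of_not_ge htR)
          exact mul_le_mul_of_nonneg_left this hεc
        have hgt : g t = τf t := by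
          simp only [hgdef]
          rw [max_eq_right hτ0, min_eq_right hτ2]
        rw [hgt]
        simp [cf, sf, htr, htR, bendU, bendN]
  -- key logarithmic estimate
  have hgkey : ∀ s t : ℝ, 0 ≤ s → s ≤ t →
      s * nZ (bendU nZ (g t) - bendU nZ (g s)) ≤ ε * (t - s) := by
    intro s t hs hst
    rcases hs.eq_or_lt with h | h
    · rw [← h, zero_mul]
      have ht : (0:ℝ) ≤ t - 0 := by linarith
      exact mul_nonneg hε0.le ht
    · have htpos : 0 < t := lt_of_lt_of_le h hst
      have hτmono : τf s ≤ τf t := by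
        apply mul_le_mul_of_nonneg_left _ hεc
        exact Real.log_le_log (div_pos h hr) (by gcongr)
      have hmono : g s ≤ g t := bend_clamp_mono hτmono
      have hglip : g t - g s ≤ ε / cZ * (Real.log t - Real.log s) := by
        have h1 := bend_clamp_lip (τf t) (τf s) hτmono
        have h2 : τf t - τf s = ε / cZ * (Real.log t - Real.log s) := by
          simp only [τf]
          rw [Real.log_div htpos.ne' hr.ne', Real.log_div h.ne' hr.ne']
          ring
        simp only [hgdef]
        calc min (π/2) (max 0 (τf t)) - min (π/2) (max 0 (τf s)) ≤ τf t - τf s := h1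
          _ = _ := h2
      have hlipC := bendU_lipC nZ hN_add hN_smul hN_def h10 h01 huncond cZ hcZ'
        (g s) (g t) (hg0 s) hmono (hg2 t)
      have hstep : nZ (bendU nZ (g t) - bendU nZ (g s)) ≤ ε * (Real.log t - Real.log s) := by
        calc nZ (bendU nZ (g t) - bendU nZ (g s)) ≤ cZ * (g t - g s) := hlipC
          _ ≤ cZ * (ε / cZ * (Real.log t - Real.log s)) := by
              apply mul_le_mul_of_nonneg_left hglip hcZpos.le
          _ = ε * (Real.log t - Real.log s) := by field_simp
      have hlog : Real.log t - Real.log s = Real.log (t / s) :=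
        (Real.log_div htpos.ne' h.ne').symm
      have hlog2 : Real.log (t / s) ≤ t / s - 1 :=
        Real.log_le_sub_one_of_pos (div_pos htpos h)
      have hfin : s * (ε * (Real.log t - Real.log s)) ≤ ε * (t - s) := by
        rw [hlog]
        have h4 : s * (t / s - 1) = t - s := by field_simp
        have h5 : s * Real.log (t / s) ≤ t - s := by
          rw [← h4]; exact mul_le_mul_of_nonneg_left hlog2 hs
        calc s * (ε * Real.log (t / s)) = ε * (s * Real.log (t / s)) := by ring
          _ ≤ ε * (t - s) := mul_le_mul_of_nonneg_left h5 hε0.le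
      calc s * nZ (bendU nZ (g t) - bendU nZ (g s))
          ≤ s * (ε * (Real.log t - Real.log s)) := mul_le_mul_of_nonneg_left hstep hs
        _ ≤ ε * (t - s) := hfin
  -- homogeneity of the X-norm on simple pairs
  have hNXpair : ∀ (c s : ℝ) (w : Y), nZ (‖c • w‖, ‖s • w‖) = ‖w‖ * nZ (c, s) := by
    intro c s w
    rw [norm_smul, norm_smul, Real.norm_eq_abs, Real.norm_eq_abs]
    have h1 : ((|c| * ‖w‖, |s| * ‖w‖) : ℝ × ℝ) = ‖w‖ • ((|c|, |s|) : ℝ × ℝ) := by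
      simp [Prod.ext_iff, mul_comm]
    rw [h1, hN_smul, abs_of_nonneg (norm_nonneg w), bendNZ_abs nZ huncond]
  have hNXadd : ∀ p q : Y × Y, NX (p + q) ≤ NX p + NX q := by
    intro p q
    simp only [NX, Prod.fst_add, Prod.snd_add]
    calc nZ (‖p.1 + q.1‖, ‖p.2 + q.2‖) ≤ nZ (‖p.1‖ + ‖q.1‖, ‖p.2‖ + ‖q.2‖) :=
          bendNZ_mono nZ hN_add hN_smul huncond _ _ _ _ (norm_nonneg _) (norm_add_le _ _)
            (norm_nonneg _) (norm_add_le _ _)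
      _ = nZ ((‖p.1‖, ‖p.2‖) + (‖q.1‖, ‖q.2‖)) := by rw [Prod.mk_add_mk]
      _ ≤ NX p + NX q := hN_add _ _
  have hNXneg : ∀ p : Y × Y, NX (-p) = NX p := by
    intro p
    simp only [NX, Prod.fst_neg, Prod.snd_neg, norm_neg]
  -- the asymmetric key estimate
  have key : ∀ x y : Y, ‖y‖ ≤ ‖x‖ →
      (1 - ε) * ‖x - y‖ ≤ NX (T x - T y) ∧ NX (T x - T y) ≤ (1 + ε) * ‖x - y‖ := by
    intro x y hba
    set a := ‖x‖ with hadef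
    set b := ‖y‖ with hbdef
    set P : Y × Y := (cf a • (x - y), sf a • (x - y)) with hPdef
    set Q : Y × Y := ((cf a - cf b) • y, (sf a - sf b) • y) with hQdef
    have hTsub : T x - T y = P + Q := by
      simp only [T, hPdef, hQdef, Prod.mk_sub_mk, Prod.mk_add_mk, ← hadef, ← hbdef]
      refine Prod.ext ?_ ?_ <;> · simp only; module
    have hcfa : nZ (cf a, sf a) = 1 := by
      rw [hF a (norm_nonneg x)]
      exact bendU_norm nZ hN_add hN_smul hN_def _
    have hNP : NX P = ‖x - y‖ := by
      simp only [NX, hPdef]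
      rw [hNXpair, hcfa, mul_one]
    have hNQ : NX Q ≤ ε * ‖x - y‖ := by
      simp only [NX, hQdef]
      rw [hNXpair]
      have h1 : ((cf a - cf b, sf a - sf b) : ℝ × ℝ)
          = bendU nZ (g a) - bendU nZ (g b) := by
        rw [← hF a (norm_nonneg x), ← hF b (norm_nonneg y), Prod.mk_sub_mk]
      rw [h1, mul_comm]
      calc nZ (bendU nZ (g a) - bendU nZ (g b)) * ‖y‖
          = b * nZ (bendU nZ (g a) - bendU nZ (g b)) := by rw [mul_comm, hbdef]
        _ ≤ ε * (a - b) := hgkey b a (norm_nonneg y) hba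
        _ ≤ ε * ‖x - y‖ := by
            apply mul_le_mul_of_nonneg_left _ hε0.le
            exact (abs_le.1 (abs_norm_sub_norm_le x y)).2
    constructor
    · have hPid : P = (T x - T y) + -Q := by rw [hTsub]; abel
      have h2 : NX P ≤ NX (T x - T y) + NX (-Q) := by rw [hPid]; exact hNXadd _ _
      rw [hNXneg] at h2
      rw [hNP] at h2
      linarith
    · rw [hTsub]
      calc NX (P + Q) ≤ NX P + NX Q := hNXadd _ _
        _ ≤ ‖x - y‖ + ε * ‖x - y‖ := by rw [hNP]; linarith
        _ = (1 + ε) * ‖x - y‖ := by ring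
  refine ⟨?_, ?_, ?_, ?_⟩
  · intro x
    simp only [NX, T]
    rw [hNXpair]
    have h1 : nZ (cf ‖x‖, sf ‖x‖) = 1 := by
      rw [hF ‖x‖ (norm_nonneg x)]
      exact bendU_norm nZ hN_add hN_smul hN_def _
    rw [h1, mul_one]
  · intro x y
    rcases le_total ‖y‖ ‖x‖ with h | h
    · exact key x y h
    · have h1 := key y x h
      have h2 : NX (T x - T y) = NX (T y - T x) := by
        rw [← hNXneg (T y - T x), neg_sub]
      have h3 : ‖x - y‖ = ‖y - x‖ := norm_sub_rev x y
      rw [h2, h3]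
      exact ⟨h1.1, h1.2⟩
  · intro x hx
    simp only [T, cf, sf, if_pos hx]
    simp
  · intro x hx
    have h1 : ¬ ‖x‖ ≤ r := not_le.2 (lt_of_lt_of_le hrR hx)
    simp only [T, cf, sf, if_neg h1, if_pos hx]
    simp
end

section
/- In the setting of the logarithmic-spiral bending map T x = (c(x)x, s(x)x) from Y into X = Y ⊕_Z Y with τ(t) = (ε/c_Z) ln(t/r) on [r,R], let U(x) = (c(x), s(x)) ∈ Z. Then for all x, y ∈ Y with ‖y‖_Y ≤ ‖x‖_Y (and y ≠ 0), ‖U(x) − U(y)‖_Z ≤ ε(‖x‖_Y − ‖y‖_Y)/‖y‖_Y, and consequently ‖y‖_Y · ‖U(x) − U(y)‖_Z ≤ ε‖x − y‖_Y. -/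
open Real
set_option linter.unusedSectionVars false

section Aux

variable {nZ : ℝ × ℝ → ℝ}
  (hN_add : ∀ p q, nZ (p + q) ≤ nZ p + nZ q)
  (hN_smul : ∀ (t : ℝ) p, nZ (t • p) = |t| * nZ p)
  (h10 : nZ (1, 0) = 1) (h01 : nZ (0, 1) = 1)
  (huncond : ∀ a b : ℝ, nZ (-a, b) = nZ (a, b) ∧ nZ (a, -b) = nZ (a, b))

include hN_smul in
lemma aux_zero : nZ 0 = 0 := by
  have := hN_smul 0 0; simpa using this

include hN_smul in
lemma aux_neg (p : ℝ × ℝ) : nZ (-p) = nZ p := by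
  have := hN_smul (-1) p; simpa using this

include hN_add hN_smul in
lemma aux_nonneg (p : ℝ × ℝ) : 0 ≤ nZ p := by
  have h := hN_add p (-p)
  rw [add_neg_cancel, aux_zero hN_smul, aux_neg hN_smul] at h
  linarith

include hN_add in
lemma aux_sub (p q : ℝ × ℝ) : nZ p - nZ q ≤ nZ (p - q) := by
  have h := hN_add (p - q) q
  simp only [sub_add_cancel] at h
  linarith

include hN_add hN_smul in
lemma aux_abs_sub (p q : ℝ × ℝ) : |nZ p - nZ q| ≤ nZ (p - q) := by
  rw [abs_sub_le_iff]
  refine ⟨aux_sub hN_add p q, ?_⟩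
  have := aux_sub hN_add q p
  rwa [← aux_neg hN_smul (q - p), neg_sub] at this

include hN_add hN_smul h10 huncond in
lemma aux_fst_le (a b : ℝ) : |a| ≤ nZ (a, b) := by
  have h1 : nZ (a, 0) = |a| := by
    have := hN_smul a (1, 0)
    simp only [Prod.smul_mk, smul_eq_mul, mul_one, mul_zero, h10] at this
    simpa using this
  have h3 : nZ ((a,b) + (a,-b)) ≤ nZ (a,b) + nZ (a,-b) := hN_add _ _
  have h4 : ((a,b) + (a,-b) : ℝ × ℝ) = (2:ℝ) • (a, 0) := by
    simp [Prod.ext_iff]; ring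
  rw [h4, hN_smul] at h3
  rw [(huncond a b).2] at h3
  have h5 : |(2:ℝ)| = 2 := by norm_num
  rw [h5, h1] at h3
  linarith

include hN_add hN_smul h01 huncond in
lemma aux_snd_le (a b : ℝ) : |b| ≤ nZ (a, b) := by
  have h1 : nZ (0, b) = |b| := by
    have := hN_smul b (0, 1)
    simp only [Prod.smul_mk, smul_eq_mul, mul_one, mul_zero, h01] at this
    simpa using this
  have h3 : nZ ((a,b) + (-a,b)) ≤ nZ (a,b) + nZ (-a,b) := hN_add _ _
  have h4 : ((a,b) + (-a,b) : ℝ × ℝ) = (2:ℝ) • (0, b) := by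
    simp [Prod.ext_iff]; ring
  rw [h4, hN_smul] at h3
  rw [(huncond a b).1] at h3
  have h5 : |(2:ℝ)| = 2 := by norm_num
  rw [h5, h1] at h3
  linarith

include hN_add hN_smul h10 h01 in
lemma aux_le_abs (a b : ℝ) : nZ (a, b) ≤ |a| + |b| := by
  have h4 : ((a,b) : ℝ × ℝ) = a • ((1:ℝ),(0:ℝ)) + b • ((0:ℝ),(1:ℝ)) := by
    simp [Prod.ext_iff]
  rw [h4]
  calc nZ _ ≤ nZ (a • ((1:ℝ),(0:ℝ))) + nZ (b • ((0:ℝ),(1:ℝ))) := hN_add _ _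
    _ = |a| + |b| := by rw [hN_smul, hN_smul, h10, h01]; ring

include hN_add hN_smul h10 h01 huncond in
lemma aux_n_ge (τ : ℝ) : (1/2 : ℝ) ≤ nZ (Real.cos τ, Real.sin τ) := by
  by_contra h
  push_neg at h
  have h1 := aux_fst_le hN_add hN_smul h10 huncond (Real.cos τ) (Real.sin τ)
  have h2 := aux_snd_le hN_add hN_smul h01 huncond (Real.cos τ) (Real.sin τ)
  nlinarith [Real.sin_sq_add_cos_sq τ, sq_abs (Real.cos τ), sq_abs (Real.sin τ),
    abs_nonneg (Real.cos τ), abs_nonneg (Real.sin τ)]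

include hN_add hN_smul h10 h01 in
lemma aux_n_le2 (τ : ℝ) : nZ (Real.cos τ, Real.sin τ) ≤ 2 := by
  have h := aux_le_abs hN_add hN_smul h10 h01 (Real.cos τ) (Real.sin τ)
  have := Real.abs_cos_le_one τ
  have := Real.abs_sin_le_one τ
  linarith

include hN_add hN_smul h10 h01 huncond in
lemma aux_u_lip (τ₁ τ₂ : ℝ) :
    nZ ((Real.cos τ₂ / nZ (Real.cos τ₂, Real.sin τ₂),
         Real.sin τ₂ / nZ (Real.cos τ₂, Real.sin τ₂)) -
        (Real.cos τ₁ / nZ (Real.cos τ₁, Real.sin τ₁),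
         Real.sin τ₁ / nZ (Real.cos τ₁, Real.sin τ₁))) ≤ 20 * |τ₂ - τ₁| := by
  set w₁ : ℝ × ℝ := (Real.cos τ₁, Real.sin τ₁) with hw₁
  set w₂ : ℝ × ℝ := (Real.cos τ₂, Real.sin τ₂) with hw₂
  set n₁ := nZ w₁ with hn₁
  set n₂ := nZ w₂ with hn₂
  have hg1 : (1/2 : ℝ) ≤ n₁ := aux_n_ge hN_add hN_smul h10 h01 huncond τ₁
  have hg2 : (1/2 : ℝ) ≤ n₂ := aux_n_ge hN_add hN_smul h10 h01 huncond τ₂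
  have hl1 : n₁ ≤ 2 := aux_n_le2 hN_add hN_smul h10 h01 τ₁
  have hl2 : n₂ ≤ 2 := aux_n_le2 hN_add hN_smul h10 h01 τ₂
  have hp1 : (0:ℝ) < n₁ := by linarith
  have hp2 : (0:ℝ) < n₂ := by linarith
  -- difference of the curve
  have hdw : nZ (w₂ - w₁) ≤ 2 * |τ₂ - τ₁| := by
    have habs2 : |(τ₂ - τ₁)/2| = |τ₂ - τ₁|/2 := by
      rw [abs_div]; norm_num
    have hc : |Real.cos τ₂ - Real.cos τ₁| ≤ |τ₂ - τ₁| := by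
      rw [Real.cos_sub_cos, abs_mul, abs_mul]
      have e2 : |(-2:ℝ)| = 2 := by norm_num
      rw [e2]
      have k1 := Real.abs_sin_le_one ((τ₂ + τ₁)/2)
      have k2 : |Real.sin ((τ₂ - τ₁)/2)| ≤ |τ₂ - τ₁|/2 := by
        rw [← habs2]; exact Real.abs_sin_le_abs
      nlinarith [abs_nonneg (Real.sin ((τ₂ - τ₁)/2)), abs_nonneg (Real.sin ((τ₂ + τ₁)/2))]
    have hs : |Real.sin τ₂ - Real.sin τ₁| ≤ |τ₂ - τ₁| := by
      rw [Real.sin_sub_sin, abs_mul, abs_mul]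
      have e2 : |(2:ℝ)| = 2 := by norm_num
      rw [e2]
      have k1 := Real.abs_cos_le_one ((τ₂ + τ₁)/2)
      have k2 : |Real.sin ((τ₂ - τ₁)/2)| ≤ |τ₂ - τ₁|/2 := by
        rw [← habs2]; exact Real.abs_sin_le_abs
      nlinarith [abs_nonneg (Real.sin ((τ₂ - τ₁)/2)), abs_nonneg (Real.cos ((τ₂ + τ₁)/2))]
    have : w₂ - w₁ = (Real.cos τ₂ - Real.cos τ₁, Real.sin τ₂ - Real.sin τ₁) := by
      simp [hw₁, hw₂, Prod.ext_iff]
    rw [this]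
    have := aux_le_abs hN_add hN_smul h10 h01 (Real.cos τ₂ - Real.cos τ₁)
      (Real.sin τ₂ - Real.sin τ₁)
    linarith
  have hdn : |n₁ - n₂| ≤ 2 * |τ₂ - τ₁| := by
    have h := aux_abs_sub hN_add hN_smul w₁ w₂
    have : nZ (w₁ - w₂) = nZ (w₂ - w₁) := by
      rw [← aux_neg hN_smul (w₂ - w₁), neg_sub]
    linarith
  -- decomposition
  have hdecomp : ((Real.cos τ₂ / n₂, Real.sin τ₂ / n₂) : ℝ × ℝ) -
      (Real.cos τ₁ / n₁, Real.sin τ₁ / n₁) =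
      n₂⁻¹ • (w₂ - w₁) + (n₂⁻¹ - n₁⁻¹) • w₁ := by
    simp [hw₁, hw₂, Prod.ext_iff, smul_eq_mul]
    constructor <;> field_simp <;> ring
  rw [hdecomp]
  have h1 : nZ (n₂⁻¹ • (w₂ - w₁) + (n₂⁻¹ - n₁⁻¹) • w₁) ≤
      |n₂⁻¹| * nZ (w₂ - w₁) + |n₂⁻¹ - n₁⁻¹| * nZ w₁ := by
    calc nZ _ ≤ nZ (n₂⁻¹ • (w₂ - w₁)) + nZ ((n₂⁻¹ - n₁⁻¹) • w₁) := hN_add _ _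
      _ = _ := by rw [hN_smul, hN_smul]
  have h2 : |n₂⁻¹| ≤ 2 := by
    rw [abs_of_pos (by positivity)]
    rw [inv_le_comm₀ hp2 (by norm_num)]
    linarith
  have h3 : |n₂⁻¹ - n₁⁻¹| ≤ 8 * |τ₂ - τ₁| := by
    have he : n₂⁻¹ - n₁⁻¹ = (n₁ - n₂) / (n₁ * n₂) := by
      rw [eq_div_iff (by positivity : (n₁ * n₂) ≠ 0)]
      field_simp
    rw [he, abs_div, abs_of_pos (by positivity : (0:ℝ) < n₁ * n₂)]
    rw [div_le_iff₀ (by positivity)]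
    have k3 : (0:ℝ) ≤ n₁ * n₂ - 1/4 := by nlinarith
    nlinarith [mul_nonneg (abs_nonneg (τ₂ - τ₁)) k3]
  have h4 : nZ w₁ ≤ 2 := hl1
  have h5 : 0 ≤ nZ (w₂ - w₁) := aux_nonneg hN_add hN_smul _
  have h6 : |n₂⁻¹| * nZ (w₂ - w₁) ≤ 2 * (2 * |τ₂ - τ₁|) :=
    mul_le_mul h2 hdw h5 (by norm_num)
  have h7 : |n₂⁻¹ - n₁⁻¹| * nZ w₁ ≤ 8 * |τ₂ - τ₁| * 2 :=
    mul_le_mul h3 h4 (aux_nonneg hN_add hN_smul w₁) (by positivity)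
  linarith

-- the set S
include hN_add hN_smul h10 h01 huncond in
lemma aux_bdd : BddAbove {q | ∃ τ₁ τ₂ : ℝ, 0 ≤ τ₁ ∧ τ₁ < τ₂ ∧ τ₂ ≤ π / 2 ∧
    q = nZ ((Real.cos τ₂ / nZ (Real.cos τ₂, Real.sin τ₂),
             Real.sin τ₂ / nZ (Real.cos τ₂, Real.sin τ₂)) -
            (Real.cos τ₁ / nZ (Real.cos τ₁, Real.sin τ₁),
             Real.sin τ₁ / nZ (Real.cos τ₁, Real.sin τ₁))) / (τ₂ - τ₁)} := by
  refine ⟨20, ?_⟩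
  rintro q ⟨τ₁, τ₂, h0, hlt, hle, rfl⟩
  rw [div_le_iff₀ (by linarith)]
  have h := aux_u_lip hN_add hN_smul h10 h01 huncond τ₁ τ₂
  have habs : |τ₂ - τ₁| = τ₂ - τ₁ := abs_of_pos (by linarith)
  rw [habs] at h
  linarith

include hN_add hN_smul h10 h01 huncond in
lemma aux_mem_pi : (nZ ((-1 : ℝ), (1:ℝ)) / (π / 2)) ∈ {q | ∃ τ₁ τ₂ : ℝ, 0 ≤ τ₁ ∧ τ₁ < τ₂ ∧ τ₂ ≤ π / 2 ∧
    q = nZ ((Real.cos τ₂ / nZ (Real.cos τ₂, Real.sin τ₂),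
             Real.sin τ₂ / nZ (Real.cos τ₂, Real.sin τ₂)) -
            (Real.cos τ₁ / nZ (Real.cos τ₁, Real.sin τ₁),
             Real.sin τ₁ / nZ (Real.cos τ₁, Real.sin τ₁))) / (τ₂ - τ₁)} := by
  refine ⟨0, π/2, le_refl 0, Real.pi_div_two_pos, le_refl _, ?_⟩
  rw [Real.cos_zero, Real.sin_zero, Real.cos_pi_div_two, Real.sin_pi_div_two, h10, h01]
  norm_num

include hN_add hN_smul h10 h01 huncond in
lemma aux_cZ_pos {cZ : ℝ}
    (hcZ : cZ = sSup {q | ∃ τ₁ τ₂ : ℝ, 0 ≤ τ₁ ∧ τ₁ < τ₂ ∧ τ₂ ≤ π / 2 ∧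
      q = nZ ((Real.cos τ₂ / nZ (Real.cos τ₂, Real.sin τ₂),
               Real.sin τ₂ / nZ (Real.cos τ₂, Real.sin τ₂)) -
              (Real.cos τ₁ / nZ (Real.cos τ₁, Real.sin τ₁),
               Real.sin τ₁ / nZ (Real.cos τ₁, Real.sin τ₁))) / (τ₂ - τ₁)}) :
    0 < cZ := by
  have hb := aux_bdd hN_add hN_smul h10 h01 huncond
  have hm := aux_mem_pi hN_add hN_smul h10 h01 huncond
  have hle := le_csSup hb hm
  rw [← hcZ] at hle
  have h1 : (1:ℝ) ≤ nZ ((-1 : ℝ), (1:ℝ)) := by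
    have := aux_fst_le hN_add hN_smul h10 huncond (-1 : ℝ) (1:ℝ)
    simpa using this
  have hp : (0:ℝ) < π/2 := Real.pi_div_two_pos
  have : (0:ℝ) < nZ ((-1 : ℝ), (1:ℝ)) / (π / 2) := by positivity
  linarith

include hN_add hN_smul h10 h01 huncond in
lemma aux_key_s11 {cZ : ℝ}
    (hcZ : cZ = sSup {q | ∃ τ₁ τ₂ : ℝ, 0 ≤ τ₁ ∧ τ₁ < τ₂ ∧ τ₂ ≤ π / 2 ∧
      q = nZ ((Real.cos τ₂ / nZ (Real.cos τ₂, Real.sin τ₂),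
               Real.sin τ₂ / nZ (Real.cos τ₂, Real.sin τ₂)) -
              (Real.cos τ₁ / nZ (Real.cos τ₁, Real.sin τ₁),
               Real.sin τ₁ / nZ (Real.cos τ₁, Real.sin τ₁))) / (τ₂ - τ₁)})
    (τ₁ τ₂ : ℝ) (h0 : 0 ≤ τ₁) (h12 : τ₁ ≤ τ₂) (h2 : τ₂ ≤ π / 2) :
    nZ ((Real.cos τ₂ / nZ (Real.cos τ₂, Real.sin τ₂),
         Real.sin τ₂ / nZ (Real.cos τ₂, Real.sin τ₂)) -
        (Real.cos τ₁ / nZ (Real.cos τ₁, Real.sin τ₁),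
         Real.sin τ₁ / nZ (Real.cos τ₁, Real.sin τ₁))) ≤ cZ * (τ₂ - τ₁) := by
  rcases eq_or_lt_of_le h12 with rfl | hlt
  · simp [aux_zero hN_smul]
  · have hb := aux_bdd hN_add hN_smul h10 h01 huncond
    have hmem : nZ ((Real.cos τ₂ / nZ (Real.cos τ₂, Real.sin τ₂),
         Real.sin τ₂ / nZ (Real.cos τ₂, Real.sin τ₂)) -
        (Real.cos τ₁ / nZ (Real.cos τ₁, Real.sin τ₁),
         Real.sin τ₁ / nZ (Real.cos τ₁, Real.sin τ₁))) / (τ₂ - τ₁) ∈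
        {q | ∃ τ₁ τ₂ : ℝ, 0 ≤ τ₁ ∧ τ₁ < τ₂ ∧ τ₂ ≤ π / 2 ∧
          q = nZ ((Real.cos τ₂ / nZ (Real.cos τ₂, Real.sin τ₂),
                   Real.sin τ₂ / nZ (Real.cos τ₂, Real.sin τ₂)) -
                  (Real.cos τ₁ / nZ (Real.cos τ₁, Real.sin τ₁),
                   Real.sin τ₁ / nZ (Real.cos τ₁, Real.sin τ₁))) / (τ₂ - τ₁)} :=
      ⟨τ₁, τ₂, h0, hlt, h2, rfl⟩
    have hle := le_csSup hb hmem
    rw [← hcZ] at hle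
    rw [div_le_iff₀ (by linarith)] at hle
    linarith [hle]

end Aux



/-- The estimates \eqref{E:str} and \eqref{E:bound_norm} for the angular part
U(x) = (c(x), s(x)) of the logarithmic-spiral bending map. -/
theorem stmt_11
    {Y : Type*} [NormedAddCommGroup Y] [NormedSpace ℝ Y]
    (nZ : ℝ × ℝ → ℝ)
    (hN_add : ∀ p q, nZ (p + q) ≤ nZ p + nZ q)
    (hN_smul : ∀ (t : ℝ) p, nZ (t • p) = |t| * nZ p)
    (hN_def : ∀ p, nZ p = 0 → p = 0)
    (h10 : nZ (1, 0) = 1) (h01 : nZ (0, 1) = 1)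
    (huncond : ∀ a b : ℝ, nZ (-a, b) = nZ (a, b) ∧ nZ (a, -b) = nZ (a, b))
    (cZ : ℝ)
    (hcZ : cZ = sSup {q | ∃ τ₁ τ₂ : ℝ, 0 ≤ τ₁ ∧ τ₁ < τ₂ ∧ τ₂ ≤ π / 2 ∧
      q = nZ ((Real.cos τ₂ / nZ (Real.cos τ₂, Real.sin τ₂),
               Real.sin τ₂ / nZ (Real.cos τ₂, Real.sin τ₂)) -
              (Real.cos τ₁ / nZ (Real.cos τ₁, Real.sin τ₁),
               Real.sin τ₁ / nZ (Real.cos τ₁, Real.sin τ₁))) / (τ₂ - τ₁)})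
    (ε r R : ℝ) (hε0 : 0 < ε) (hε1 : ε < 1) (hr : 0 < r) (hrR : r < R)
    (hR : ε / cZ * Real.log (R / r) = π / 2) :
    let τf : ℝ → ℝ := fun t => ε / cZ * Real.log (t / r)
    let cf : ℝ → ℝ := fun t =>
      if t ≤ r then 1 else if R ≤ t then 0 else
        Real.cos (τf t) / nZ (Real.cos (τf t), Real.sin (τf t))
    let sf : ℝ → ℝ := fun t =>
      if t ≤ r then 0 else if R ≤ t then 1 else
        Real.sin (τf t) / nZ (Real.cos (τf t), Real.sin (τf t))
    let U : Y → ℝ × ℝ := fun x => (cf ‖x‖, sf ‖x‖)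
    ∀ x y : Y, y ≠ 0 → ‖y‖ ≤ ‖x‖ →
      nZ (U x - U y) ≤ ε * (‖x‖ - ‖y‖) / ‖y‖ ∧
      ‖y‖ * nZ (U x - U y) ≤ ε * ‖x - y‖ := by
  intro τf cf sf U x y hy hxy
  have hcpos : 0 < cZ := aux_cZ_pos hN_add hN_smul h10 h01 huncond hcZ
  set t₁ := ‖y‖ with ht₁def
  set t₂ := ‖x‖ with ht₂def
  have ht₁ : 0 < t₁ := norm_pos_iff.mpr hy
  have ht₂ : 0 < t₂ := lt_of_lt_of_le ht₁ hxy
  -- clamped values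
  set a := min R (max r t₁) with hadef
  set b := min R (max r t₂) with hbdef
  have hra : r ≤ a := le_min hrR.le (le_max_left _ _)
  have hrb : r ≤ b := le_min hrR.le (le_max_left _ _)
  have haR : a ≤ R := min_le_left _ _
  have hbR : b ≤ R := min_le_left _ _
  have hab : a ≤ b := min_le_min le_rfl (max_le_max le_rfl hxy)
  have hapos : 0 < a := lt_of_lt_of_le hr hra
  have hbpos : 0 < b := lt_of_lt_of_le hr hrb
  -- the value of (cf t, sf t) is the normalized arc at τf of the clamp
  have hval : ∀ t : ℝ, 0 < t →
      ((cf t, sf t) : ℝ × ℝ) =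
      (Real.cos (τf (min R (max r t))) /
        nZ (Real.cos (τf (min R (max r t))), Real.sin (τf (min R (max r t)))),
       Real.sin (τf (min R (max r t))) /
        nZ (Real.cos (τf (min R (max r t))), Real.sin (τf (min R (max r t))))) := by
    intro t ht
    by_cases h1 : t ≤ r
    · have hm : max r t = r := max_eq_left h1
      have hmin : min R r = r := min_eq_right hrR.le
      rw [hm, hmin]
      have hτ : τf r = 0 := by
        simp only [τf]
        rw [div_self hr.ne', Real.log_one, mul_zero]
      rw [hτ, Real.cos_zero, Real.sin_zero, h10]
      simp only [cf, sf, if_pos h1]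
      norm_num
    · push_neg at h1
      have hm : max r t = t := max_eq_right h1.le
      rw [hm]
      by_cases h2 : R ≤ t
      · have hmin : min R t = R := min_eq_left h2
        rw [hmin]
        have hτ : τf R = π / 2 := hR
        rw [hτ, Real.cos_pi_div_two, Real.sin_pi_div_two, h01]
        simp only [cf, sf, if_neg (not_le.mpr h1), if_pos h2]
        norm_num
      · push_neg at h2
        have hmin : min R t = t := min_eq_right h2.le
        rw [hmin]
        simp only [cf, sf, if_neg (not_le.mpr h1), if_neg (not_le.mpr h2)]
  -- τ bounds
  have hτa0 : 0 ≤ τf a := by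
    simp only [τf]
    have : (1:ℝ) ≤ a / r := (le_div_iff₀ hr).mpr (by linarith)
    have := Real.log_nonneg this
    positivity
  have hτab : τf a ≤ τf b := by
    simp only [τf]
    have hlog : Real.log (a / r) ≤ Real.log (b / r) :=
      Real.log_le_log (by positivity) (by gcongr)
    have hεc : 0 ≤ ε / cZ := by positivity
    exact mul_le_mul_of_nonneg_left hlog hεc
  have hτb : τf b ≤ π / 2 := by
    rw [← hR]
    simp only [τf]
    have hlog : Real.log (b / r) ≤ Real.log (R / r) :=
      Real.log_le_log (by positivity) (by gcongr)
    have hεc : 0 ≤ ε / cZ := by positivity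
    exact mul_le_mul_of_nonneg_left hlog hεc
  -- main estimate
  have hkey := aux_key_s11 hN_add hN_smul h10 h01 huncond hcZ (τf a) (τf b) hτa0 hτab hτb
  have hUx : U x = _ := hval t₂ ht₂
  have hUy : U y = _ := hval t₁ ht₁
  have hnU : nZ (U x - U y) ≤ cZ * (τf b - τf a) := by
    rw [show U x = (cf t₂, sf t₂) from rfl, show U y = (cf t₁, sf t₁) from rfl,
      hval t₂ ht₂, hval t₁ ht₁]
    exact hkey
  -- compute cZ * (τf b - τf a) = ε * log (b/a)
  have hcomp : cZ * (τf b - τf a) = ε * Real.log (b / a) := by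
    simp only [τf]
    rw [Real.log_div hbpos.ne' hr.ne', Real.log_div hapos.ne' hr.ne',
      Real.log_div hbpos.ne' hapos.ne']
    field_simp
    ring
  have hlog_le : Real.log (b / a) ≤ (b - a) / a := by
    have h := Real.log_le_sub_one_of_pos (show (0:ℝ) < b / a by positivity)
    have : b / a - 1 = (b - a) / a := by field_simp
    linarith [h, this ▸ h]
  -- clamp comparison
  have hclamp : (b - a) / a ≤ (t₂ - t₁) / t₁ := by
    rcases eq_or_lt_of_le hab with heq | hlt
    · rw [← heq, sub_self, zero_div]
      exact div_nonneg (by linarith) ht₁.le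
    · have haR' : a < R := lt_of_lt_of_le hlt hbR
      have ha_eq : a = max r t₁ := by
        rcases le_or_gt R (max r t₁) with h | h
        · exfalso
          have : a = R := min_eq_left h
          linarith
        · exact min_eq_right h.le
      have ht₁a : t₁ ≤ a := by rw [ha_eq]; exact le_max_right _ _
      have hbt₂ : b ≤ t₂ := by
        rcases le_or_gt r t₂ with h | h
        · calc b ≤ max r t₂ := min_le_right _ _
            _ = t₂ := max_eq_right h
        · exfalso
          have : max r t₂ = r := max_eq_left h.le
          have : b = r := by rw [hbdef, this, min_eq_right hrR.le]
          linarith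
      exact div_le_div₀ (by linarith) (by linarith) ht₁ ht₁a
  have part1 : nZ (U x - U y) ≤ ε * (t₂ - t₁) / t₁ := by
    rw [mul_div_assoc]
    calc nZ (U x - U y) ≤ cZ * (τf b - τf a) := hnU
      _ = ε * Real.log (b / a) := hcomp
      _ ≤ ε * ((b - a) / a) := mul_le_mul_of_nonneg_left hlog_le hε0.le
      _ ≤ ε * ((t₂ - t₁) / t₁) := mul_le_mul_of_nonneg_left hclamp hε0.le
  refine ⟨part1, ?_⟩
  have part2 : t₁ * nZ (U x - U y) ≤ ε * (t₂ - t₁) := by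
    have := mul_le_mul_of_nonneg_left part1 ht₁.le
    have heq : t₁ * (ε * (t₂ - t₁) / t₁) = ε * (t₂ - t₁) := by field_simp
    linarith [heq ▸ this]
  have hnorm : t₂ - t₁ ≤ ‖x - y‖ := norm_sub_norm_le x y
  calc t₁ * nZ (U x - U y) ≤ ε * (t₂ - t₁) := part2
    _ ≤ ε * ‖x - y‖ := mul_le_mul_of_nonneg_left hnorm hε0.le
end

section
/- Let X = X₁ ⊕ X₂ be a direct sum of Banach spaces with direct sum projections of norm at most A ≥ 1, let Y₁ ⊆ X₁ and Y₂ ⊆ X₂ be finite-dimensional subspaces with Euclidean norms induced from X, let 0 < α with 1 − α(1 + (2−α)A) > 0, and suppose: (A) there is an α-net N₂ of the unit sphere of Y₂ such that (1−α)‖y₁+y₂‖ ≤ ‖O₁y₁+y₂‖ ≤ (1+α)‖y₁+y₂‖ for all y₁ ∈ Y₁, all scalar multiples y₂ of elements of N₂, and all orthogonal O₁ on Y₁; and (B) there is an α-net N₁ of the unit sphere of Y₁ such that (1−α)‖y₁+y₂‖ ≤ ‖y₁+O₂y₂‖ ≤ (1+α)‖y₁+y₂‖ for all scalar multiples y₁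 of elements of N₁, all y₂ ∈ Y₂, and all orthogonal O₂ on Y₂. Then for all y₁ ∈ Y₁, y₂ ∈ Y₂ and all orthogonal operators O₁ on Y₁, O₂ on Y₂: (1 − α(1+(2−α)A))² ‖y₁+y₂‖ ≤ ‖O₁y₁ + O₂y₂‖ ≤ (1 + α(1+(2+α)A))² ‖y₁+y₂‖. -/
set_option maxHeartbeats 1000000 in
/-- Lemma `L:NetToEvery`: the net conditions (A) and (B) imply the two-sided
almost-invariance estimate \eqref{E:Approx} for all orthogonal operators. -/
theorem stmt_15
    {Y₁ Y₂ : Type*}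
    [NormedAddCommGroup Y₁] [InnerProductSpace ℝ Y₁] [FiniteDimensional ℝ Y₁]
    [NormedAddCommGroup Y₂] [InnerProductSpace ℝ Y₂] [FiniteDimensional ℝ Y₂]
    (NX : Y₁ × Y₂ → ℝ)
    (hN_add : ∀ p q, NX (p + q) ≤ NX p + NX q)
    (hN_smul : ∀ (t : ℝ) p, NX (t • p) = |t| * NX p)
    (hN_def : ∀ p, NX p = 0 → p = 0)
    (hN_res1 : ∀ y₁ : Y₁, NX (y₁, 0) = ‖y₁‖)
    (hN_res2 : ∀ y₂ : Y₂, NX (0, y₂) = ‖y₂‖)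
    (A : ℝ) (hA : 1 ≤ A)
    (hproj : ∀ p : Y₁ × Y₂, NX (p.1, 0) ≤ A * NX p ∧ NX (0, p.2) ≤ A * NX p)
    (α : ℝ) (hα0 : 0 < α) (hα1 : α < 1)
    (hpos : 0 < 1 - α * (1 + (2 - α) * A))
    (N₁ : Set Y₁) (N₂ : Set Y₂)
    (hN₁sphere : ∀ z ∈ N₁, ‖z‖ = 1)
    (hN₂sphere : ∀ z ∈ N₂, ‖z‖ = 1)
    (hN₁net : ∀ y₁ : Y₁, ‖y₁‖ = 1 → ∃ z ∈ N₁, ‖y₁ - z‖ < α)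
    (hN₂net : ∀ y₂ : Y₂, ‖y₂‖ = 1 → ∃ z ∈ N₂, ‖y₂ - z‖ < α)
    (hcondA : ∀ (O₁ : Y₁ ≃ₗᵢ[ℝ] Y₁) (y₁ : Y₁) (t : ℝ), ∀ z ∈ N₂,
      (1 - α) * NX (y₁, t • z) ≤ NX (O₁ y₁, t • z) ∧
      NX (O₁ y₁, t • z) ≤ (1 + α) * NX (y₁, t • z))
    (hcondB : ∀ (O₂ : Y₂ ≃ₗᵢ[ℝ] Y₂) (y₂ : Y₂) (t : ℝ), ∀ z ∈ N₁,
      (1 - α) * NX (t • z, y₂) ≤ NX (t • z, O₂ y₂) ∧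
      NX (t • z, O₂ y₂) ≤ (1 + α) * NX (t • z, y₂)) :
    ∀ (O₁ : Y₁ ≃ₗᵢ[ℝ] Y₁) (O₂ : Y₂ ≃ₗᵢ[ℝ] Y₂) (y₁ : Y₁) (y₂ : Y₂),
      (1 - α * (1 + (2 - α) * A)) ^ 2 * NX (y₁, y₂) ≤ NX (O₁ y₁, O₂ y₂) ∧
      NX (O₁ y₁, O₂ y₂) ≤ (1 + α * (1 + (2 + α) * A)) ^ 2 * NX (y₁, y₂) := by
  classical
  have hN0 : NX 0 = 0 := by
    have h := hN_smul 0 0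
    simpa using h
  have hNneg : ∀ p, NX (-p) = NX p := by
    intro p
    have h := hN_smul (-1) p
    simpa using h
  have hNnonneg : ∀ p, 0 ≤ NX p := by
    intro p
    have h := hN_add p (-p)
    rw [add_neg_cancel, hN0, hNneg] at h
    linarith
  set c : ℝ := 1 - α * (1 + (2 - α) * A) with hc
  set C : ℝ := 1 + α * (1 + (2 + α) * A) with hCdef
  have hA0 : (0:ℝ) < A := by linarith
  have h2a : (0:ℝ) < 2 - α := by linarith
  have hc1 : c ≤ 1 := by
    rw [hc]; nlinarith [mul_pos (mul_pos hα0 h2a) hA0]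
  have hC1 : 1 ≤ C := by
    rw [hCdef]; nlinarith [mul_pos (mul_pos hα0 (by linarith : (0:ℝ) < 2 + α)) hA0]
  -- Step A: moving the first coordinate by an isometry
  have stepA : ∀ (O₁ : Y₁ ≃ₗᵢ[ℝ] Y₁) (y₁ : Y₁) (y₂ : Y₂),
      c * NX (y₁, y₂) ≤ NX (O₁ y₁, y₂) ∧ NX (O₁ y₁, y₂) ≤ C * NX (y₁, y₂) := by
    intro O₁ y₁ y₂
    by_cases hy2 : y₂ = 0
    · subst hy2
      have h1 : NX (O₁ y₁, (0:Y₂)) = ‖y₁‖ := by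
        rw [hN_res1]; exact O₁.norm_map y₁
      have h2 : NX (y₁, (0:Y₂)) = ‖y₁‖ := hN_res1 y₁
      rw [h1, h2]
      have hn : (0:ℝ) ≤ ‖y₁‖ := norm_nonneg _
      constructor <;> nlinarith
    · set M : ℝ := NX (y₁, y₂) with hM
      have hM0 : 0 < M := by
        rcases lt_or_eq_of_le (hNnonneg (y₁, y₂)) with h | h
        · exact h
        · exfalso
          have := hN_def (y₁, y₂) h.symm
          exact hy2 (congrArg Prod.snd this)
      set t : ℝ := ‖y₂‖ with ht
      have ht0 : 0 < t := norm_pos_iff.mpr hy2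
      have hu : ‖t⁻¹ • y₂‖ = 1 := by
        rw [norm_smul, Real.norm_eq_abs, abs_inv, abs_of_pos ht0]
        field_simp
        exact ht.symm
      obtain ⟨z, hzN, hznear⟩ := hN₂net (t⁻¹ • y₂) hu
      set e : Y₂ := y₂ - t • z with he
      have hE : ‖e‖ ≤ α * A * M := by
        have h1 : ‖e‖ = t * ‖t⁻¹ • y₂ - z‖ := by
          rw [he]
          have : y₂ - t • z = t • (t⁻¹ • y₂ - z) := by
            rw [smul_sub, smul_smul]
            field_simp
            rw [one_smul]
          rw [this, norm_smul, Real.norm_eq_abs, abs_of_pos ht0]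
        have h2 : ‖e‖ ≤ t * α := by
          rw [h1]
          exact mul_le_mul_of_nonneg_left hznear.le ht0.le
        have h3 : t ≤ A * M := by
          have := (hproj (y₁, y₂)).2
          rw [hN_res2] at this
          exact this
        nlinarith
      have hsplit : (y₁, y₂) = (y₁, t • z) + ((0:Y₁), e) := by
        rw [he, Prod.mk_add_mk]
        simp
      have hsplit2 : ((O₁ y₁ : Y₁), y₂) = (O₁ y₁, t • z) + ((0:Y₁), e) := by
        rw [he, Prod.mk_add_mk]
        simp
      have hsplit3 : ((y₁ : Y₁), t • z) = (y₁, y₂) + ((0:Y₁), -e) := by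
        rw [he, Prod.mk_add_mk]
        simp
      have hsplit4 : ((O₁ y₁ : Y₁), t • z) = (O₁ y₁, y₂) + ((0:Y₁), -e) := by
        rw [he, Prod.mk_add_mk]
        simp
      have hEnorm : NX ((0:Y₁), e) = ‖e‖ := hN_res2 e
      have hEnorm' : NX ((0:Y₁), -e) = ‖e‖ := by rw [hN_res2, norm_neg]
      have hub1 : NX (y₁, t • z) ≤ M + ‖e‖ := by
        calc NX (y₁, t • z) ≤ NX (y₁, y₂) + NX ((0:Y₁), -e) := by
              rw [hsplit3]; exact hN_add _ _
          _ = M + ‖e‖ := by rw [hEnorm', hM]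
      have hlb1 : M - ‖e‖ ≤ NX (y₁, t • z) := by
        have : M ≤ NX (y₁, t • z) + ‖e‖ := by
          calc M = NX ((y₁, t • z) + ((0:Y₁), e)) := by rw [← hsplit]
            _ ≤ NX (y₁, t • z) + NX ((0:Y₁), e) := hN_add _ _
            _ = NX (y₁, t • z) + ‖e‖ := by rw [hEnorm]
        linarith
      have hub2 : NX (O₁ y₁, y₂) ≤ NX (O₁ y₁, t • z) + ‖e‖ := by
        calc NX (O₁ y₁, y₂) = NX ((O₁ y₁, t • z) + ((0:Y₁), e)) := by rw [← hsplit2]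
          _ ≤ NX (O₁ y₁, t • z) + NX ((0:Y₁), e) := hN_add _ _
          _ = NX (O₁ y₁, t • z) + ‖e‖ := by rw [hEnorm]
      have hlb2 : NX (O₁ y₁, t • z) - ‖e‖ ≤ NX (O₁ y₁, y₂) := by
        have : NX (O₁ y₁, t • z) ≤ NX (O₁ y₁, y₂) + ‖e‖ := by
          calc NX (O₁ y₁, t • z) = NX ((O₁ y₁, y₂) + ((0:Y₁), -e)) := by rw [← hsplit4]
            _ ≤ NX (O₁ y₁, y₂) + NX ((0:Y₁), -e) := hN_add _ _
            _ = NX (O₁ y₁, y₂) + ‖e‖ := by rw [hEnorm']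
        linarith
      obtain ⟨hcl, hcu⟩ := hcondA O₁ y₁ t z hzN
      have hM1nn : 0 ≤ NX (y₁, t • z) := hNnonneg _
      constructor
      · rw [hc]
        nlinarith [mul_le_mul_of_nonneg_left hlb1 (by linarith : (0:ℝ) ≤ 1 - α),
          mul_le_mul_of_nonneg_left hE (by linarith : (0:ℝ) ≤ 2 - α)]
      · rw [hCdef]
        nlinarith [mul_le_mul_of_nonneg_left hub1 (by linarith : (0:ℝ) ≤ 1 + α),
          mul_le_mul_of_nonneg_left hE (by linarith : (0:ℝ) ≤ 2 + α)]
  -- Step B: moving the second coordinate by an isometry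
  have stepB : ∀ (O₂ : Y₂ ≃ₗᵢ[ℝ] Y₂) (y₁ : Y₁) (y₂ : Y₂),
      c * NX (y₁, y₂) ≤ NX (y₁, O₂ y₂) ∧ NX (y₁, O₂ y₂) ≤ C * NX (y₁, y₂) := by
    intro O₂ y₁ y₂
    by_cases hy1 : y₁ = 0
    · subst hy1
      have h1 : NX ((0:Y₁), O₂ y₂) = ‖y₂‖ := by
        rw [hN_res2]; exact O₂.norm_map y₂
      have h2 : NX ((0:Y₁), y₂) = ‖y₂‖ := hN_res2 y₂
      rw [h1, h2]
      have hn : (0:ℝ) ≤ ‖y₂‖ := norm_nonneg _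
      constructor <;> nlinarith
    · set M : ℝ := NX (y₁, y₂) with hM
      have hM0 : 0 < M := by
        rcases lt_or_eq_of_le (hNnonneg (y₁, y₂)) with h | h
        · exact h
        · exfalso
          have := hN_def (y₁, y₂) h.symm
          exact hy1 (congrArg Prod.fst this)
      set t : ℝ := ‖y₁‖ with ht
      have ht0 : 0 < t := norm_pos_iff.mpr hy1
      have hu : ‖t⁻¹ • y₁‖ = 1 := by
        rw [norm_smul, Real.norm_eq_abs, abs_inv, abs_of_pos ht0]
        field_simp
        exact ht.symm
      obtain ⟨z, hzN, hznear⟩ := hN₁net (t⁻¹ • y₁) hu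
      set e : Y₁ := y₁ - t • z with he
      have hE : ‖e‖ ≤ α * A * M := by
        have h1 : ‖e‖ = t * ‖t⁻¹ • y₁ - z‖ := by
          rw [he]
          have : y₁ - t • z = t • (t⁻¹ • y₁ - z) := by
            rw [smul_sub, smul_smul]
            field_simp
            rw [one_smul]
          rw [this, norm_smul, Real.norm_eq_abs, abs_of_pos ht0]
        have h2 : ‖e‖ ≤ t * α := by
          rw [h1]
          exact mul_le_mul_of_nonneg_left hznear.le ht0.le
        have h3 : t ≤ A * M := by
          have := (hproj (y₁, y₂)).1
          rw [hN_res1] at this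
          exact this
        nlinarith
      have hsplit : (y₁, y₂) = (t • z, y₂) + (e, (0:Y₂)) := by
        rw [he, Prod.mk_add_mk]
        simp
      have hsplit2 : ((y₁ : Y₁), O₂ y₂) = (t • z, O₂ y₂) + (e, (0:Y₂)) := by
        rw [he, Prod.mk_add_mk]
        simp
      have hsplit3 : ((t • z : Y₁), y₂) = (y₁, y₂) + (-e, (0:Y₂)) := by
        rw [he, Prod.mk_add_mk]
        simp
      have hsplit4 : ((t • z : Y₁), O₂ y₂) = (y₁, O₂ y₂) + (-e, (0:Y₂)) := by
        rw [he, Prod.mk_add_mk]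
        simp
      have hEnorm : NX (e, (0:Y₂)) = ‖e‖ := hN_res1 e
      have hEnorm' : NX (-e, (0:Y₂)) = ‖e‖ := by rw [hN_res1, norm_neg]
      have hub1 : NX (t • z, y₂) ≤ M + ‖e‖ := by
        calc NX (t • z, y₂) ≤ NX (y₁, y₂) + NX (-e, (0:Y₂)) := by
              rw [hsplit3]; exact hN_add _ _
          _ = M + ‖e‖ := by rw [hEnorm', hM]
      have hlb1 : M - ‖e‖ ≤ NX (t • z, y₂) := by
        have : M ≤ NX (t • z, y₂) + ‖e‖ := by
          calc M = NX ((t • z, y₂) + (e, (0:Y₂))) := by rw [← hsplit]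
            _ ≤ NX (t • z, y₂) + NX (e, (0:Y₂)) := hN_add _ _
            _ = NX (t • z, y₂) + ‖e‖ := by rw [hEnorm]
        linarith
      have hub2 : NX (y₁, O₂ y₂) ≤ NX (t • z, O₂ y₂) + ‖e‖ := by
        calc NX (y₁, O₂ y₂) = NX ((t • z, O₂ y₂) + (e, (0:Y₂))) := by rw [← hsplit2]
          _ ≤ NX (t • z, O₂ y₂) + NX (e, (0:Y₂)) := hN_add _ _
          _ = NX (t • z, O₂ y₂) + ‖e‖ := by rw [hEnorm]
      have hlb2 : NX (t • z, O₂ y₂) - ‖e‖ ≤ NX (y₁, O₂ y₂) := by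
        have : NX (t • z, O₂ y₂) ≤ NX (y₁, O₂ y₂) + ‖e‖ := by
          calc NX (t • z, O₂ y₂) = NX ((y₁, O₂ y₂) + (-e, (0:Y₂))) := by rw [← hsplit4]
            _ ≤ NX (y₁, O₂ y₂) + NX (-e, (0:Y₂)) := hN_add _ _
            _ = NX (y₁, O₂ y₂) + ‖e‖ := by rw [hEnorm']
        linarith
      obtain ⟨hcl, hcu⟩ := hcondB O₂ y₂ t z hzN
      have hM1nn : 0 ≤ NX (t • z, y₂) := hNnonneg _
      constructor
      · rw [hc]
        nlinarith [mul_le_mul_of_nonneg_left hlb1 (by linarith : (0:ℝ) ≤ 1 - α),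
          mul_le_mul_of_nonneg_left hE (by linarith : (0:ℝ) ≤ 2 - α)]
      · rw [hCdef]
        nlinarith [mul_le_mul_of_nonneg_left hub1 (by linarith : (0:ℝ) ≤ 1 + α),
          mul_le_mul_of_nonneg_left hE (by linarith : (0:ℝ) ≤ 2 + α)]
  intro O₁ O₂ y₁ y₂
  obtain ⟨hA1, hA2⟩ := stepA O₁ y₁ y₂
  obtain ⟨hB1, hB2⟩ := stepB O₂ (O₁ y₁) y₂
  have hcpos : 0 < c := hpos
  have hC0 : 0 < C := by linarith
  have hMnn : 0 ≤ NX (y₁, y₂) := hNnonneg _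
  constructor
  · calc c ^ 2 * NX (y₁, y₂) = c * (c * NX (y₁, y₂)) := by ring
      _ ≤ c * NX (O₁ y₁, y₂) := by nlinarith
      _ ≤ NX (O₁ y₁, O₂ y₂) := hB1
  · calc NX (O₁ y₁, O₂ y₂) ≤ C * NX (O₁ y₁, y₂) := hB2
      _ ≤ C * (C * NX (y₁, y₂)) := by nlinarith
      _ = C ^ 2 * NX (y₁, y₂) := by ring
end

section
/- Let X be a normed space with subspaces W₁, W₂ with W₁ ∩ W₂ = {0}, such that both direct sum projections of W₁ ⊕ W₂ (in the X-norm) have norm at most 1 + γ for some γ > 0. Suppose W₁ and W₂ carry norms ‖·‖¹_∼ and ‖·‖²_∼ satisfying (1/(1+γ))‖x‖ⁱ_∼ ≤ ‖x‖_X ≤ ‖x‖ⁱ_∼ for x in Wᵢ. Define on W₁ ⊕ W₂ the norm ‖(x₁,x₂)‖_N = max{‖x₁‖¹_∼, ‖x₂‖²_∼, ‖x₁ + x₂‖_X}. Then the direct sum projections of (W₁ ⊕ W₂, ‖·‖_N) have norm 1, and ‖x₁+x₂‖_X ≤ ‖(x₁,x₂)‖_N ≤ (1+γ)²‖x₁+x₂‖_X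 for all x₁ ∈ W₁, x₂ ∈ W₂. -/
/-- Lemma `L:Ren_2i-1_2i`: the renorming ‖(x₁,x₂)‖_N = max{‖x₁‖¹_∼, ‖x₂‖²_∼, ‖x₁+x₂‖_X}
makes the direct sum projections have norm 1 and is (1+γ)²-equivalent to the X-norm. -/
theorem stmt_16
    {X : Type*} [NormedAddCommGroup X] [NormedSpace ℝ X]
    (W₁ W₂ : Submodule ℝ X) (hdisj : W₁ ⊓ W₂ = ⊥)
    (γ : ℝ) (hγ : 0 < γ)
    (hproj : ∀ (x₁ : W₁) (x₂ : W₂),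
      ‖(x₁ : X)‖ ≤ (1 + γ) * ‖(x₁ : X) + (x₂ : X)‖ ∧
      ‖(x₂ : X)‖ ≤ (1 + γ) * ‖(x₁ : X) + (x₂ : X)‖)
    (n₁ : W₁ → ℝ) (n₂ : W₂ → ℝ)
    (hn₁_add : ∀ x y, n₁ (x + y) ≤ n₁ x + n₁ y)
    (hn₁_smul : ∀ (t : ℝ) x, n₁ (t • x) = |t| * n₁ x)
    (hn₁_def : ∀ x, n₁ x = 0 → x = 0)
    (hn₂_add : ∀ x y, n₂ (x + y) ≤ n₂ x + n₂ y)
    (hn₂_smul : ∀ (t : ℝ) x, n₂ (t • x) = |t| * n₂ x)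
    (hn₂_def : ∀ x, n₂ x = 0 → x = 0)
    (hsand₁ : ∀ x : W₁, (1 / (1 + γ)) * n₁ x ≤ ‖(x : X)‖ ∧ ‖(x : X)‖ ≤ n₁ x)
    (hsand₂ : ∀ x : W₂, (1 / (1 + γ)) * n₂ x ≤ ‖(x : X)‖ ∧ ‖(x : X)‖ ≤ n₂ x) :
    let N : W₁ × W₂ → ℝ := fun p =>
      max (n₁ p.1) (max (n₂ p.2) ‖(p.1 : X) + (p.2 : X)‖)
    (∀ (x₁ : W₁) (x₂ : W₂), n₁ x₁ ≤ N (x₁, x₂) ∧ n₂ x₂ ≤ N (x₁, x₂)) ∧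
    (∀ x₁ : W₁, N (x₁, 0) = n₁ x₁) ∧
    (∀ x₂ : W₂, N (0, x₂) = n₂ x₂) ∧
    (∀ (x₁ : W₁) (x₂ : W₂),
      ‖(x₁ : X) + (x₂ : X)‖ ≤ N (x₁, x₂) ∧
      N (x₁, x₂) ≤ (1 + γ) ^ 2 * ‖(x₁ : X) + (x₂ : X)‖) := by
  intro N
  have h1pos : (0:ℝ) < 1 + γ := by linarith
  have hn10 : n₁ 0 = 0 := by
    have := hn₁_smul 0 0; simpa using this
  have hn20 : n₂ 0 = 0 := by
    have := hn₂_smul 0 0; simpa using this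
  have hnn1 : ∀ x : W₁, 0 ≤ n₁ x := fun x => le_trans (norm_nonneg _) (hsand₁ x).2
  have hnn2 : ∀ x : W₂, 0 ≤ n₂ x := fun x => le_trans (norm_nonneg _) (hsand₂ x).2
  refine ⟨fun x₁ x₂ => ⟨le_max_left _ _, le_trans (le_max_left _ _) (le_max_right _ _)⟩,
    fun x₁ => ?_, fun x₂ => ?_, fun x₁ x₂ => ?_⟩
  · simp only [N, Submodule.coe_zero, add_zero, hn20]
    have h := (hsand₁ x₁).2
    have : max (0:ℝ) ‖(x₁:X)‖ ≤ n₁ x₁ := by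
      exact max_le (hnn1 x₁) h
    exact max_eq_left this
  · simp only [N, Submodule.coe_zero, zero_add, hn10]
    have h := (hsand₂ x₂).2
    have hmax : max (n₂ x₂) ‖(x₂:X)‖ = n₂ x₂ := max_eq_left h
    rw [hmax]
    exact max_eq_right (hnn2 x₂)
  · constructor
    · exact le_trans (le_max_right _ _) (le_max_right _ _)
    · have hp := hproj x₁ x₂
      have h1 : n₁ x₁ ≤ (1 + γ) * ‖(x₁:X)‖ := by
        have := (hsand₁ x₁).1
        rw [one_div, inv_mul_le_iff₀ h1pos] at this
        exact this
      have h2 : n₂ x₂ ≤ (1 + γ) * ‖(x₂:X)‖ := by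
        have := (hsand₂ x₂).1
        rw [one_div, inv_mul_le_iff₀ h1pos] at this
        exact this
      have hb1 : n₁ x₁ ≤ (1+γ)^2 * ‖(x₁:X)+(x₂:X)‖ := by nlinarith [hp.1, mul_le_mul_of_nonneg_left hp.1 h1pos.le]
      have hb2 : n₂ x₂ ≤ (1+γ)^2 * ‖(x₁:X)+(x₂:X)‖ := by nlinarith [hp.2, mul_le_mul_of_nonneg_left hp.2 h1pos.le]
      have hb3 : ‖(x₁:X)+(x₂:X)‖ ≤ (1+γ)^2 * ‖(x₁:X)+(x₂:X)‖ := by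
        nlinarith [norm_nonneg ((x₁:X)+(x₂:X)), mul_nonneg hγ.le (norm_nonneg ((x₁:X)+(x₂:X))), mul_nonneg (mul_nonneg hγ.le hγ.le) (norm_nonneg ((x₁:X)+(x₂:X)))]
      exact max_le hb1 (max_le hb2 hb3)
end

section
/- Let u₁ ∈ Y₁ and u₂ ∈ Y₂ be unit vectors in Euclidean subspaces of a normed space whose direct sum carries a norm invariant under orthogonal operators on each summand. Define f(a₁, a₂) = ‖|a₁|u₁ + |a₂|u₂‖ for (a₁,a₂) ∈ ℝ². Then f satisfies the triangle inequality: f(a₁+b₁, a₂+b₂) ≤ f(a₁,a₂) + f(b₁,b₂) for all (a₁,a₂),(b₁,b₂) ∈ ℝ². -/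
/-- The triangle inequality for the function f(a₁,a₂) = ‖|a₁|u₁ + |a₂|u₂‖ constructed
in the proof of Lemma `L:InvToUncond`. -/
theorem stmt_17
    {Y₁ Y₂ : Type*}
    [NormedAddCommGroup Y₁] [InnerProductSpace ℝ Y₁] [FiniteDimensional ℝ Y₁]
    [NormedAddCommGroup Y₂] [InnerProductSpace ℝ Y₂] [FiniteDimensional ℝ Y₂]
    (N : Y₁ × Y₂ → ℝ)
    (hN_add : ∀ p q, N (p + q) ≤ N p + N q)
    (hN_smul : ∀ (t : ℝ) p, N (t • p) = |t| * N p)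
    (hN_def : ∀ p, N p = 0 → p = 0)
    (hinv : ∀ (O₁ : Y₁ ≃ₗᵢ[ℝ] Y₁) (O₂ : Y₂ ≃ₗᵢ[ℝ] Y₂) (y₁ : Y₁) (y₂ : Y₂),
      N (O₁ y₁, O₂ y₂) = N (y₁, y₂))
    (u₁ : Y₁) (u₂ : Y₂) (hu₁ : ‖u₁‖ = 1) (hu₂ : ‖u₂‖ = 1) :
    let f : ℝ × ℝ → ℝ := fun a => N (|a.1| • u₁, |a.2| • u₂)
    ∀ a b : ℝ × ℝ, f (a + b) ≤ f a + f b := by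
  have key : ∀ a b : ℝ, N (|a| • u₁, |b| • u₂) = N (a • u₁, b • u₂) := by
    intro a b
    rcases abs_choice a with h1 | h1 <;> rcases abs_choice b with h2 | h2 <;>
      rw [h1, h2] <;>
      simp only [neg_smul]
    · exact hinv (LinearIsometryEquiv.refl ℝ Y₁) (LinearIsometryEquiv.neg ℝ) _ _
    · exact hinv (LinearIsometryEquiv.neg ℝ) (LinearIsometryEquiv.refl ℝ Y₂) _ _
    · exact hinv (LinearIsometryEquiv.neg ℝ) (LinearIsometryEquiv.neg ℝ) _ _
  intro f a b
  show N (|a.1 + b.1| • u₁, |a.2 + b.2| • u₂) ≤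
    N (|a.1| • u₁, |a.2| • u₂) + N (|b.1| • u₁, |b.2| • u₂)
  rw [key, key a.1 a.2, key b.1 b.2, add_smul, add_smul]
  exact hN_add (a.1 • u₁, a.2 • u₂) (b.1 • u₁, b.2 • u₂)
end
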